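/- arXiv:math/0205165 — 2 statements merged into one kernel-verified Lean document; each statement's English description precedes it below -/
import Mathlib

section
/- D_min(λ,μ) = max_{i=−k,...,n−k} (diag_i(λ) − diag_i(μ∨)), where diag_i denotes the number of boxes on the i-th diagonal of the Young diagram. -/
open Finset

/-- The set `P_{kn}` of partitions fitting in a `k × (n-k)` rectangle,
represented as antitone functions `Fin k → ℕ` bounded by `n - k`. -/
def PknFinset (k n : ℕ) : Finset (Fin k → ℕ) :=
  ((Finset.univ : Finset (Fin k → Fin (n - k + 1))).image (fun f i => (f i : ℕ))).filter
    (fun lam => ∀ i j : Fin k, i ≤ j → lam j ≤ lam i)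

/-- The 01-word of a partition `λ ∈ P_{kn}`: position `j` (0-based; 1-based `j+1`)
carries a `1` iff `j + 1 = λ_i + (k + 1 - i)` for some row `i`. -/
def omegaWord (n : ℕ) {k : ℕ} (lam : Fin k → ℕ) : Fin n → Bool :=
  fun j => decide (∃ i : Fin k, lam i + (k - (i : ℕ)) = (j : ℕ) + 1)

/-- The complement partition `λ∨`, with `λ∨_i = n - k - λ_{k+1-i}`. -/
def complP (n k : ℕ) (lam : Fin k → ℕ) : Fin k → ℕ :=
  fun i => (n - k) - lam (Fin.rev i)

/-- Size of the Durfee square of `λ` (number of boxes on the main diagonal). -/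
def diag0 {k : ℕ} (lam : Fin k → ℕ) : ℕ :=
  (Finset.univ.filter (fun i : Fin k => (i : ℕ) < lam i)).card

/-- Number of boxes of `λ` on the `i`-th diagonal. -/
def diagI {k : ℕ} (lam : Fin k → ℕ) (i : ℤ) : ℕ :=
  (Finset.univ.filter (fun a : Fin k => 0 ≤ (a : ℤ) + i ∧ (a : ℤ) + 1 + i ≤ (lam a : ℤ))).card

/-- `|λ| = λ_1 + ⋯ + λ_k`. -/
def psize {k : ℕ} (lam : Fin k → ℕ) : ℕ := ∑ i, lam i

/-- The value at index `t` of the cylindric loop `λ[r]`: the `(k,n)`-periodic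
weakly decreasing sequence with `λ[r]_{i+r} = λ_i + r` for `1 ≤ i ≤ k`. -/
def loopVal (n : ℕ) {k : ℕ} (lam : Fin k → ℕ) (r t : ℤ) : ℤ :=
  if h : 0 < k then
    (lam ⟨((t - r - 1) % (k : ℤ)).toNat, by
      have hk0 : ((k : ℤ)) ≠ 0 := by exact_mod_cast h.ne'
      have h1 : 0 ≤ (t - r - 1) % (k : ℤ) := Int.emod_nonneg _ hk0
      have h2 : (t - r - 1) % (k : ℤ) < (k : ℤ) := Int.emod_lt_of_pos _ (by exact_mod_cast h)
      omega⟩ : ℤ) + r - ((t - r - 1) / (k : ℤ)) * ((n : ℤ) - (k : ℤ))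
  else 0

/-- The cylindric diagram of shape `λ[r]/μ[s]`, as a `Shift`-invariant subset of `ℤ²`
(whose quotient modulo `(-k, n-k)ℤ` is the diagram in the cylinder). -/
def cylDiagram (n : ℕ) {k : ℕ} (lam mu : Fin k → ℕ) (r s : ℤ) : Set (ℤ × ℤ) :=
  {p | loopVal n mu s p.1 < p.2 ∧ p.2 ≤ loopVal n lam r p.1}

/-- The cylindric shape `λ[r]/μ[s]` is toric: the projection of its diagram from the
cylinder `ℤ²/(-k, n-k)ℤ` to the torus `(ℤ/k) × (ℤ/(n-k))` is injective. -/
def IsToricShape (n : ℕ) {k : ℕ} (lam mu : Fin k → ℕ) (r s : ℤ) : Prop :=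
  ∀ p q : ℤ × ℤ, p ∈ cylDiagram n lam mu r s → q ∈ cylDiagram n lam mu r s →
    (k : ℤ) ∣ (q.1 - p.1) → ((n : ℤ) - k) ∣ (q.2 - p.2) →
    ∃ m : ℤ, q.1 = p.1 - m * k ∧ q.2 = p.2 + m * ((n : ℤ) - k)

/-- A semi-standard cylindric tableau of shape `λ/d/μ = λ[d]/μ[0]`, encoded as a
`Shift`-periodic function on `ℤ²` that is positive exactly on the diagram, weakly
increasing along rows and strictly increasing along columns. -/
def IsCylTableau (n : ℕ) {k : ℕ} (lam mu : Fin k → ℕ) (d : ℕ) (T : ℤ × ℤ → ℕ) : Prop :=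
  (∀ p : ℤ × ℤ, p ∈ cylDiagram n lam mu (d : ℤ) 0 ↔ 0 < T p) ∧
  (∀ p : ℤ × ℤ, T (p.1 - (k : ℤ), p.2 + ((n : ℤ) - k)) = T p) ∧
  (∀ p : ℤ × ℤ, p ∈ cylDiagram n lam mu (d : ℤ) 0 →
      (p.1, p.2 + 1) ∈ cylDiagram n lam mu (d : ℤ) 0 → T p ≤ T (p.1, p.2 + 1)) ∧
  (∀ p : ℤ × ℤ, p ∈ cylDiagram n lam mu (d : ℤ) 0 →
      (p.1 + 1, p.2) ∈ cylDiagram n lam mu (d : ℤ) 0 → T p < T (p.1 + 1, p.2))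

/-- The number of entries of the cylindric tableau `T` equal to `c`, counted once per
`Shift`-orbit (rows `1,…,k` form a fundamental domain). -/
noncomputable def cylWeight (k : ℕ) (T : ℤ × ℤ → ℕ) (c : ℕ) : ℕ :=
  {p : ℤ × ℤ | 1 ≤ p.1 ∧ p.1 ≤ (k : ℤ) ∧ T p = c}.ncard

/-- Number of semi-standard cylindric tableaux of shape `λ/d/μ` with weight `β`
(entries taken among `1, …, l`). -/
noncomputable def tabCount (n : ℕ) {k : ℕ} (lam mu : Fin k → ℕ) (d : ℕ) {l : ℕ} (beta : Fin l → ℕ) : ℕ :=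
  {T : ℤ × ℤ → ℕ | IsCylTableau n lam mu d T ∧
    (∀ i : Fin l, cylWeight k T ((i : ℕ) + 1) = beta i) ∧
    (∀ c : ℕ, l < c → cylWeight k T c = 0)}.ncard

/-- The elementary symmetric generator `e_t` of `ℤ[q, e_1, …, e_k]` (zero out of range,
`1` for `t = 0`).  The variable `none` is the quantum parameter `q`. -/
noncomputable def epolyZ (k : ℕ) (t : ℤ) : MvPolynomial (Option (Fin k)) ℤ :=
  if t = 0 then 1
  else if h : 0 < t ∧ t ≤ (k : ℤ) then MvPolynomial.X (some ⟨(t - 1).toNat, by omega⟩) else 0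

/-- The complete homogeneous symmetric function `h_m`, expressed in the `e_i`
via the dual Jacobi–Trudi determinant. -/
noncomputable def hpolyD (k m : ℕ) : MvPolynomial (Option (Fin k)) ℤ :=
  Matrix.det (Matrix.of (fun i j : Fin m => epolyZ k (1 + (j : ℤ) - (i : ℤ))))

/-- `h_t` with the convention `h_t = 0` for `t < 0`. -/
noncomputable def hpolyDZ (k : ℕ) (t : ℤ) : MvPolynomial (Option (Fin k)) ℤ :=
  if 0 ≤ t then hpolyD k t.toNat else 0

/-- The ideal `I_q = ⟨h_{n-k+1}, …, h_{n-1}, h_n + (-1)^k q⟩` of `ℤ[q, e_1, …, e_k]`. -/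
noncomputable def qIdeal (k n : ℕ) : Ideal (MvPolynomial (Option (Fin k)) ℤ) :=
  Ideal.span ((hpolyD k '' (Set.Ioo (n - k) n)) ∪
    {hpolyD k n + ((-1) ^ k : ℤ) • MvPolynomial.X none})

/-- The quantum cohomology ring `QH*(Gr_{k,n}) = ℤ[q, e_1, …, e_k]/I_q`. -/
abbrev QHRing (k n : ℕ) := MvPolynomial (Option (Fin k)) ℤ ⧸ qIdeal k n

/-- The class of the quantum parameter `q` in `QH*(Gr_{k,n})`. -/
noncomputable def qClass (k n : ℕ) : QHRing k n := Ideal.Quotient.mk _ (MvPolynomial.X none)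

/-- The Schubert class `σ_λ ∈ QH*(Gr_{k,n})`, defined by the (quantum) Giambelli
formula `σ_λ = det(h_{λ_i + j - i})`. -/
noncomputable def sigmaClass (k n : ℕ) (lam : Fin k → ℕ) : QHRing k n :=
  Ideal.Quotient.mk _
    (Matrix.det (Matrix.of (fun i j : Fin k => hpolyDZ k ((lam i : ℤ) + (j : ℤ) - (i : ℤ)))))

/-- The special class `h_j = σ_{(j)}`. -/
noncomputable def hClass (k n : ℕ) (j : ℕ) : QHRing k n := Ideal.Quotient.mk _ (hpolyD k j)

/-- The special class `e_j = σ_{(1^j)}`. -/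
noncomputable def eClass (k n : ℕ) (j : ℕ) : QHRing k n := Ideal.Quotient.mk _ (epolyZ k (j : ℤ))

/-- The statement that `gw` is the family of structure constants (Gromov–Witten
invariants) of `QH*(Gr_{k,n})`:
`σ_μ * σ_ν = ∑_{d,λ} q^d C_{μν}^{λ,d} σ_λ` (all structure constants vanish
beyond degree `2k(n-k)`, which bounds the possible degrees). -/
def IsGWFamily (k n : ℕ)
    (gw : (Fin k → ℕ) → (Fin k → ℕ) → (Fin k → ℕ) → ℕ → ℤ) : Prop :=
  ∀ mu nu : Fin k → ℕ, mu ∈ PknFinset k n → nu ∈ PknFinset k n →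
    (sigmaClass k n mu * sigmaClass k n nu =
      ∑ e ∈ Finset.range (2 * k * (n - k) + 1), ∑ lm ∈ PknFinset k n,
        gw mu nu lm e • (qClass k n ^ e * sigmaClass k n lm)) ∧
    (∀ e lm, 2 * k * (n - k) < e → gw mu nu lm e = 0)

/-- Recover a partition in `P_{kn}` from a 01-word with `k` ones. -/
def partOfWord (k n : ℕ) (w : Fin n → Bool) : Fin k → ℕ :=
  fun i =>
    if h : (Finset.univ.filter (fun j : Fin n => w j = true)).card = k then
      ((Finset.orderIsoOfFin _ h (Fin.rev i) : Fin n) : ℕ) + 1 - (k - (i : ℕ))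
    else 0

/-- Cyclic rotation of a 01-word: `(rotWord a w)_j = w_{j+a mod n}`. -/
def rotWord (n : ℕ) (a : ℤ) (w : Fin n → Bool) : Fin n → Bool :=
  fun j =>
    if h : 0 < n then
      w ⟨(((j : ℤ) + a) % (n : ℤ)).toNat, by
        have hn0 : ((n : ℤ)) ≠ 0 := by exact_mod_cast h.ne'
        have h1 : 0 ≤ ((j : ℤ) + a) % (n : ℤ) := Int.emod_nonneg _ hn0
        have h2 : ((j : ℤ) + a) % (n : ℤ) < (n : ℤ) := Int.emod_lt_of_pos _ (by exact_mod_cast h)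
        omega⟩
    else false
  
/-- The `a`-th power of the cyclic shift `S` on `P_{kn}`:
`S^a(λ)` is the partition whose 01-word is `ω(λ)` rotated by `a`. -/
def Srot (k n : ℕ) (a : ℤ) (lam : Fin k → ℕ) : Fin k → ℕ :=
  partOfWord k n (rotWord n a (omegaWord n lam))

/-- `φ_i(λ)`: for `1 ≤ i ≤ n` the partial sum `ω_1 + ⋯ + ω_i` of the 01-word of `λ`,
extended to all `i ∈ ℤ` by `φ_{i+n} = φ_i + k`. -/
def phi (n : ℕ) {k : ℕ} (lam : Fin k → ℕ) (i : ℤ) : ℤ :=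
  ((Finset.univ.filter
      (fun j : Fin n => ((j : ℕ) : ℤ) < i % (n : ℤ) ∧ omegaWord n lam j = true)).card : ℤ)
    + (k : ℤ) * (i / (n : ℤ))

/-- `C_{λμν}(q) = ∑_e CCoef(λ,μ,ν,e) q^e`: the coefficient of `q^e` in the
Gromov–Witten generating function `q^d C^d_{λμν}` (zero unless `e` equals the
degree `d = (|λ|+|μ|+|ν|-k(n-k))/n`), where `C^d_{λμν} = C_{λμ}^{ν∨,d}`. -/
def CCoef (k n : ℕ) (gw : (Fin k → ℕ) → (Fin k → ℕ) → (Fin k → ℕ) → ℕ → ℤ)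
    (lam mu nu : Fin k → ℕ) (e : ℕ) : ℤ :=
  if ((psize lam : ℤ) + psize mu + psize nu) = (k : ℤ) * ((n : ℤ) - k) + (e : ℤ) * n then
    gw lam mu (complP n k nu) e
  else 0


section DminAux

variable {k n : ℕ}

private lemma Pkn_bound {lam : Fin k → ℕ} (h : lam ∈ PknFinset k n) (a : Fin k) :
    lam a ≤ n - k := by
  simp only [PknFinset, Finset.mem_filter, Finset.mem_image, Finset.mem_univ, true_and] at h
  obtain ⟨⟨f, rfl⟩, -⟩ := h
  exact Nat.lt_succ_iff.mp (f a).2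

private lemma Pkn_anti {lam : Fin k → ℕ} (h : lam ∈ PknFinset k n) :
    ∀ a b : Fin k, a ≤ b → lam b ≤ lam a := by
  simp only [PknFinset, Finset.mem_filter] at h
  exact h.2

private lemma phi_shift (lam : Fin k → ℕ) (hn : 0 < n) (i m : ℤ) :
    phi n lam (i + n * m) = phi n lam i + k * m := by
  have hn' : (n : ℤ) ≠ 0 := by exact_mod_cast hn.ne'
  unfold phi
  rw [Int.add_mul_emod_self_left, Int.add_mul_ediv_left i m hn']
  ring

private lemma fword_inj (lam : Fin k → ℕ) (hanti : ∀ a b : Fin k, a ≤ b → lam b ≤ lam a)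
    {a b : Fin k} (h : lam a + (k - (a : ℕ)) = lam b + (k - (b : ℕ))) : a = b := by
  rcases lt_trichotomy a b with hab | hab | hab
  · have h1 := hanti a b hab.le
    have h2 : (a : ℕ) < (b : ℕ) := hab
    have h3 := b.2
    omega
  · exact hab
  · have h1 := hanti b a hab.le
    have h2 : (b : ℕ) < (a : ℕ) := hab
    have h3 := a.2
    omega

private lemma count_word (lam : Fin k → ℕ) (hb : ∀ a, lam a ≤ n - k) (hkn : k ≤ n)
    (hanti : ∀ a b : Fin k, a ≤ b → lam b ≤ lam a) (i : ℕ) :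
    (Finset.univ.filter (fun a : Fin k => lam a + (k - (a : ℕ)) ≤ i)).card
      = (Finset.univ.filter (fun j : Fin n => (j : ℕ) < i ∧ omegaWord n lam j = true)).card := by
  refine Finset.card_bij
    (fun a _ => (⟨lam a + (k - (a : ℕ)) - 1, by have := hb a; have := a.2; omega⟩ : Fin n))
    ?_ ?_ ?_
  · intro a ha
    simp only [Finset.mem_filter, Finset.mem_univ, true_and] at ha ⊢
    have h1 := hb a; have h2 := a.2
    refine ⟨by omega, ?_⟩
    simp only [omegaWord, decide_eq_true_eq]
    exact ⟨a, by omega⟩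
  · intro a ha b hb'
    simp only [Fin.mk.injEq]
    intro h
    apply fword_inj lam hanti
    have h1 := a.2; have h2 := b.2
    omega
  · intro j hj
    simp only [Finset.mem_filter, Finset.mem_univ, true_and, omegaWord,
      decide_eq_true_eq] at hj
    obtain ⟨hji, a, ha⟩ := hj
    refine ⟨a, ?_, ?_⟩
    · simp only [Finset.mem_filter, Finset.mem_univ, true_and]; omega
    · apply Fin.ext; simp only; omega

private lemma phi_eq (lam : Fin k → ℕ) (hb : ∀ a, lam a ≤ n - k) (hkn : k < n)
    (hanti : ∀ a b : Fin k, a ≤ b → lam b ≤ lam a) (i : ℕ) (hi : i ≤ n) :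
    phi n lam (i : ℤ)
      = ((Finset.univ.filter (fun a : Fin k => lam a + (k - (a : ℕ)) ≤ i)).card : ℤ) := by
  have hn : 0 < n := by omega
  rcases Nat.lt_or_ge i n with hlt | hge
  · unfold phi
    have h1 : (i : ℤ) % n = i := Int.emod_eq_of_lt (by positivity) (by exact_mod_cast hlt)
    have h2 : (i : ℤ) / n = 0 := Int.ediv_eq_zero_of_lt (by positivity) (by exact_mod_cast hlt)
    simp only [h1, h2, mul_zero, add_zero]
    rw [count_word lam hb hkn.le hanti i]
    congr 2
    ext j
    simp [Nat.cast_lt]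
  · have heq : i = n := le_antisymm hi hge
    rw [heq]
    have h0 : phi n lam ((n : ℕ) : ℤ) = phi n lam 0 + k := by
      have := phi_shift (n := n) lam hn 0 1
      simpa using this
    have hphi0 : phi n lam 0 = 0 := by
      unfold phi
      rw [Int.zero_emod, Int.zero_ediv, mul_zero, add_zero]
      have hempty : Finset.univ.filter
          (fun j : Fin n => ((j : ℕ) : ℤ) < 0 ∧ omegaWord n lam j = true) = ∅ := by
        apply Finset.filter_false_of_mem
        intro j _ hp
        have := hp.1
        omega
      rw [hempty]
      simp
    have hcard : (Finset.univ.filter (fun a : Fin k => lam a + (k - (a : ℕ)) ≤ n))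
        = Finset.univ := by
      ext a
      simp only [Finset.mem_filter, Finset.mem_univ, true_and, iff_true]
      have := hb a; have := a.2; omega
    rw [h0, hphi0, hcard]
    simp

private lemma card_filter_fin (k : ℕ) (P : ℕ → Prop) [DecidablePred P] :
    (Finset.univ.filter (fun a : Fin k => P (a : ℕ))).card
      = ((Finset.range k).filter P).card := by
  rw [Finset.card_filter, Finset.card_filter]
  exact Fin.sum_univ_eq_sum_range (fun m => if P m then 1 else 0) k

private lemma diag_count (lam : Fin k → ℕ) (hb : ∀ a, lam a ≤ n - k) (hkn : k ≤ n)
    (i : ℕ) (hi : i ≤ n) :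
    diagI lam ((i : ℤ) - k)
      + (Finset.univ.filter (fun a : Fin k => lam a + (k - (a : ℕ)) ≤ i)).card
      = min i k := by
  classical
  have hsplit := Finset.card_filter_add_card_filter_not
    (s := Finset.univ.filter (fun a : Fin k => k ≤ (a : ℕ) + i))
    (p := fun a : Fin k => lam a + (k - (a : ℕ)) ≤ i)
  rw [Finset.filter_filter, Finset.filter_filter] at hsplit
  have hA : Finset.univ.filter (fun a : Fin k => k ≤ (a : ℕ) + i ∧ lam a + (k - (a : ℕ)) ≤ i)
      = Finset.univ.filter (fun a : Fin k => lam a + (k - (a : ℕ)) ≤ i) := by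
    apply Finset.filter_congr
    intro a _
    have := a.2
    constructor
    · exact fun h => h.2
    · intro h; exact ⟨by omega, h⟩
  have hB : Finset.univ.filter
        (fun a : Fin k => k ≤ (a : ℕ) + i ∧ ¬ lam a + (k - (a : ℕ)) ≤ i)
      = Finset.univ.filter (fun a : Fin k =>
          0 ≤ (a : ℤ) + ((i : ℤ) - k) ∧ (a : ℤ) + 1 + ((i : ℤ) - k) ≤ (lam a : ℤ)) := by
    apply Finset.filter_congr
    intro a _
    have h1 := a.2
    have h2 := hb a
    omega
  have hR : (Finset.univ.filter (fun a : Fin k => k ≤ (a : ℕ) + i)).card = min i k := by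
    rw [card_filter_fin k (fun m => k ≤ m + i)]
    have he : (Finset.range k).filter (fun m => k ≤ m + i) = Finset.Ico (k - i) k := by
      ext m
      simp only [Finset.mem_filter, Finset.mem_range, Finset.mem_Ico]
      omega
    rw [he, Nat.card_Ico]
    omega
  rw [hA, hB, hR] at hsplit
  unfold diagI
  omega

private lemma diag_compl_count (mu : Fin k → ℕ) (hb : ∀ a, mu a ≤ n - k) (hkn : k ≤ n)
    (i : ℕ) (hi : i ≤ n) :
    diagI (complP n k mu) ((i : ℤ) - k)
      = (Finset.univ.filter
          (fun b : Fin k => (b : ℕ) < i ∧ mu b + (k - (b : ℕ)) ≤ n - i)).card := by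
  unfold diagI
  apply Finset.card_nbij' Fin.rev Fin.rev
  · intro a ha
    rw [Finset.mem_coe, Finset.mem_filter] at ha ⊢
    simp only [Finset.mem_filter, Finset.mem_univ, true_and, complP] at ha ⊢
    have h1 := a.2
    have h2 := hb (Fin.rev a)
    have h3 : ((Fin.rev a : Fin k) : ℕ) = k - 1 - (a : ℕ) := by
      rw [Fin.val_rev]; omega
    rw [h3]
    omega
  · intro b hbm
    rw [Finset.mem_coe, Finset.mem_filter] at hbm ⊢
    simp only [Finset.mem_filter, Finset.mem_univ, true_and, complP, Fin.rev_rev] at hbm ⊢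
    have h1 := b.2
    have h2 := hb b
    have h3 : ((Fin.rev b : Fin k) : ℕ) = k - 1 - (b : ℕ) := by
      rw [Fin.val_rev]; omega
    rw [h3]
    omega
  · intro a _; exact Fin.rev_rev a
  · intro b _; exact Fin.rev_rev b

private lemma compl_split (mu : Fin k → ℕ) (hb : ∀ a, mu a ≤ n - k) (hkn : k ≤ n)
    (i : ℕ) (hi : i ≤ n) :
    (Finset.univ.filter
        (fun b : Fin k => (b : ℕ) < i ∧ mu b + (k - (b : ℕ)) ≤ n - i)).card
      + (k - min i k)
      = (Finset.univ.filter (fun b : Fin k => mu b + (k - (b : ℕ)) ≤ n - i)).card := by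
  classical
  have hsplit := Finset.card_filter_add_card_filter_not
    (s := Finset.univ.filter (fun b : Fin k => mu b + (k - (b : ℕ)) ≤ n - i))
    (p := fun b : Fin k => (b : ℕ) < i)
  rw [Finset.filter_filter, Finset.filter_filter] at hsplit
  have hA : Finset.univ.filter
        (fun b : Fin k => mu b + (k - (b : ℕ)) ≤ n - i ∧ (b : ℕ) < i)
      = Finset.univ.filter
        (fun b : Fin k => (b : ℕ) < i ∧ mu b + (k - (b : ℕ)) ≤ n - i) := by
    apply Finset.filter_congr
    intro b _
    exact and_comm
  have hB : Finset.univ.filter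
        (fun b : Fin k => mu b + (k - (b : ℕ)) ≤ n - i ∧ ¬ (b : ℕ) < i)
      = Finset.univ.filter (fun b : Fin k => ¬ (b : ℕ) < i) := by
    apply Finset.filter_congr
    intro b _
    have h1 := b.2
    have h2 := hb b
    constructor
    · exact fun h => h.2
    · intro h; exact ⟨by omega, h⟩
  have hC : (Finset.univ.filter (fun b : Fin k => ¬ (b : ℕ) < i)).card = k - min i k := by
    rw [card_filter_fin k (fun m => ¬ m < i)]
    have he : (Finset.range k).filter (fun m => ¬ m < i) = Finset.Ico (min i k) k := by
      ext m
      simp only [Finset.mem_filter, Finset.mem_range, Finset.mem_Ico]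
      omega
    rw [he, Nat.card_Ico]
  rw [hA, hB, hC] at hsplit
  omega

private lemma key_diag (hk : 1 ≤ k) (hkn : k < n)
    (lam mu : Fin k → ℕ)
    (hlb : ∀ a, lam a ≤ n - k) (hla : ∀ a b : Fin k, a ≤ b → lam b ≤ lam a)
    (hmb : ∀ a, mu a ≤ n - k) (hma : ∀ a b : Fin k, a ≤ b → mu b ≤ mu a)
    (m : ℕ) (hm : m ≤ n) :
    (diagI lam ((m : ℤ) - k) : ℤ) - (diagI (complP n k mu) ((m : ℤ) - k) : ℤ)
      = -(phi n lam (m : ℤ) + phi n mu (-(m : ℤ))) := by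
  have hn : 0 < n := by omega
  have h1 := diag_count lam hlb hkn.le m hm
  have h2 := diag_compl_count mu hmb hkn.le m hm
  have h3 := compl_split mu hmb hkn.le m hm
  have h4 := phi_eq lam hlb hkn hla m hm
  have h5 := phi_eq mu hmb hkn hma (n - m) (by omega)
  have h6 : phi n mu (-(m : ℤ)) = phi n mu ((n - m : ℕ) : ℤ) - k := by
    have hs := phi_shift (n := n) mu hn ((n - m : ℕ) : ℤ) (-1)
    have heq : ((n - m : ℕ) : ℤ) + (n : ℤ) * (-1) = -(m : ℤ) := by
      have : ((n - m : ℕ) : ℤ) = (n : ℤ) - m := by omega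
      rw [this]; ring
    rw [heq] at hs
    omega
  rw [h2, h4, h6, h5]
  omega

end DminAux

/-- `D_min(λ,μ) = max_{i = -k,…,n-k} (diag_i(λ) - diag_i(μ∨))`, where `diag_i` is the
number of boxes on the `i`-th diagonal of the Young diagram. -/
theorem Dmin_eq_max_diag (k n : ℕ) (hk : 1 ≤ k) (hkn : k < n)
    (lam mu : Fin k → ℕ) (hlam : lam ∈ PknFinset k n) (hmu : mu ∈ PknFinset k n)
    (Dmin : ℤ)
    (hmin : IsGreatest {v : ℤ | ∃ i : ℤ, v = -(phi n lam i + phi n mu (-i))} Dmin) :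
    IsGreatest {v : ℤ | ∃ i : ℤ, -(k : ℤ) ≤ i ∧ i ≤ (n : ℤ) - k ∧
      v = (diagI lam i : ℤ) - (diagI (complP n k mu) i : ℤ)} Dmin := by
  have hlb := fun a => Pkn_bound hlam a
  have hla := Pkn_anti hlam
  have hmb := fun a => Pkn_bound hmu a
  have hma := Pkn_anti hmu
  have hn : 0 < n := by omega
  have hset : {v : ℤ | ∃ i : ℤ, -(k : ℤ) ≤ i ∧ i ≤ (n : ℤ) - k ∧
      v = (diagI lam i : ℤ) - (diagI (complP n k mu) i : ℤ)}
      = {v : ℤ | ∃ i : ℤ, v = -(phi n lam i + phi n mu (-i))} := by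
    ext v
    simp only [Set.mem_setOf_eq]
    constructor
    · rintro ⟨i, hb1, hb2, rfl⟩
      refine ⟨i + k, ?_⟩
      have hmt : (((i + k).toNat : ℕ) : ℤ) = i + k := by omega
      have hkey := key_diag hk hkn lam mu hlb hla hmb hma (i + k).toNat (by omega)
      rw [hmt] at hkey
      have hik : i + (k : ℤ) - k = i := by ring
      rw [hik] at hkey
      exact hkey
    · rintro ⟨i, rfl⟩
      set m : ℤ := i % n with hm
      set q : ℤ := i / n with hqdef
      have hq : m + (n : ℤ) * q = i := Int.emod_add_mul_ediv i n
      have hm0 : 0 ≤ m := Int.emod_nonneg i (by exact_mod_cast hn.ne')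
      have hm1 : m < n := Int.emod_lt_of_pos i (by exact_mod_cast hn)
      have hphil : phi n lam i = phi n lam m + k * q := by
        have := phi_shift (n := n) lam hn m q
        rwa [hq] at this
      have hphim : phi n mu (-i) = phi n mu (-m) - k * q := by
        have hs := phi_shift (n := n) mu hn (-m) (-q)
        have heq : -m + (n : ℤ) * -q = -i := by linear_combination -hq
        rw [heq] at hs
        rw [hs]; ring
      have hmt : ((m.toNat : ℕ) : ℤ) = m := by omega
      have hkey := key_diag hk hkn lam mu hlb hla hmb hma m.toNat (by omega)
      rw [hmt] at hkey
      refine ⟨m - k, by omega, by omega, ?_⟩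
      rw [hphil, hphim, hkey]
      ring
  rw [hset]
  exact hmin
end

section
/- In the affine nil-Temperley-Lieb algebra A_n, the elements z_k = e_k · h_{n−k} (1 ≤ k ≤ n−1) are central, and z_k · z_l = 0 for k ≠ l. -/
open Finset

/-- The defining relations of the affine nil-Temperley-Lieb algebra `A_n`. -/
inductive NTLRel (n : ℕ) : FreeAlgebra ℤ (ZMod n) → FreeAlgebra ℤ (ZMod n) → Prop
  | sq (i : ZMod n) : NTLRel n (FreeAlgebra.ι ℤ i * FreeAlgebra.ι ℤ i) 0
  | tri1 (i : ZMod n) :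
      NTLRel n (FreeAlgebra.ι ℤ i * FreeAlgebra.ι ℤ (i + 1) * FreeAlgebra.ι ℤ i) 0
  | tri2 (i : ZMod n) :
      NTLRel n (FreeAlgebra.ι ℤ (i + 1) * FreeAlgebra.ι ℤ i * FreeAlgebra.ι ℤ (i + 1)) 0
  | comm (i j : ZMod n) : i - j ≠ 1 → j - i ≠ 1 →
      NTLRel n (FreeAlgebra.ι ℤ i * FreeAlgebra.ι ℤ j) (FreeAlgebra.ι ℤ j * FreeAlgebra.ι ℤ i)

/-- The affine nil-Temperley-Lieb algebra `A_n`. -/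
abbrev NTL (n : ℕ) := RingQuot (NTLRel n)

/-- The generator `a_i` of `A_n`. -/
def ntlGen (n : ℕ) (i : ZMod n) : NTL n := RingQuot.mkRingHom (NTLRel n) (FreeAlgebra.ι ℤ i)

/-- The clockwise-ordered product `∏^↻_{i ∈ I} a_i`, computed by scanning positions
`t + (n-1), t + (n-2), …, t + 1` for a base point `t ∉ I` (so that `a_{i+1}` precedes
`a_i` whenever `i, i+1 ∈ I`). -/
def cwProdAt (n : ℕ) [NeZero n] (t : ZMod n) (I : Finset (ZMod n)) : NTL n :=
  ((List.range (n - 1)).map (fun s =>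
    if (t + ((n - 1 - s : ℕ) : ZMod n)) ∈ I then ntlGen n (t + ((n - 1 - s : ℕ) : ZMod n))
    else 1)).prod

/-- The counterclockwise-ordered product `∏^↺_{i ∈ I} a_i` (so that `a_i` precedes
`a_{i+1}` whenever `i, i+1 ∈ I`). -/
def ccwProdAt (n : ℕ) [NeZero n] (t : ZMod n) (I : Finset (ZMod n)) : NTL n :=
  ((List.range (n - 1)).map (fun s =>
    if (t + ((s + 1 : ℕ) : ZMod n)) ∈ I then ntlGen n (t + ((s + 1 : ℕ) : ZMod n))
    else 1)).prod

/-- `∏^↻_{i ∈ I} a_i` for a proper subset `I ⊂ ℤ/nℤ` (and `0` otherwise). -/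
noncomputable def cwProd (n : ℕ) [NeZero n] (I : Finset (ZMod n)) : NTL n :=
  if h : ∃ t : ZMod n, t ∉ I then cwProdAt n h.choose I else 0

/-- `∏^↺_{i ∈ I} a_i` for a proper subset `I ⊂ ℤ/nℤ` (and `0` otherwise). -/
noncomputable def ccwProd (n : ℕ) [NeZero n] (I : Finset (ZMod n)) : NTL n :=
  if h : ∃ t : ZMod n, t ∉ I then ccwProdAt n h.choose I else 0

/-- The noncommutative elementary symmetric function
`e_r = ∑_{|I| = r} ∏^↻_{i ∈ I} a_i ∈ A_n`. -/
noncomputable def eNTL (n : ℕ) [NeZero n] (r : ℕ) : NTL n :=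
  ∑ I ∈ Finset.powersetCard r (Finset.univ : Finset (ZMod n)), cwProd n I

/-- The noncommutative complete homogeneous symmetric function
`h_r = ∑_{|I| = r} ∏^↺_{i ∈ I} a_i ∈ A_n`. -/
noncomputable def hNTL (n : ℕ) [NeZero n] (r : ℕ) : NTL n :=
  ∑ I ∈ Finset.powersetCard r (Finset.univ : Finset (ZMod n)), ccwProd n I

set_option linter.unusedSectionVars false

namespace NTLProof

variable {n : ℕ} [NeZero n]

lemma rel_eq {x y : FreeAlgebra ℤ (ZMod n)} (h : NTLRel n x y) :
    RingQuot.mkRingHom (NTLRel n) x = RingQuot.mkRingHom (NTLRel n) y :=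
  RingQuot.mkRingHom_rel h

lemma gen_sq (i : ZMod n) : ntlGen n i * ntlGen n i = 0 := by
  have := rel_eq (NTLRel.sq i)
  simpa [ntlGen, map_mul] using this

lemma gen_tri1 (i : ZMod n) : ntlGen n i * ntlGen n (i + 1) * ntlGen n i = 0 := by
  have := rel_eq (NTLRel.tri1 i)
  simpa [ntlGen, map_mul] using this

lemma gen_tri2 (i : ZMod n) : ntlGen n (i + 1) * ntlGen n i * ntlGen n (i + 1) = 0 := by
  have := rel_eq (NTLRel.tri2 i)
  simpa [ntlGen, map_mul] using this

lemma gen_comm {i j : ZMod n} (h1 : i - j ≠ 1) (h2 : j - i ≠ 1) :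
    ntlGen n i * ntlGen n j = ntlGen n j * ntlGen n i := by
  have := rel_eq (NTLRel.comm i j h1 h2)
  simpa [ntlGen, map_mul] using this

/-- commutation from `x ∉ {i-1, i+1}` (with `x = i` allowed trivially). -/
lemma gen_comm' {i x : ZMod n} (h1 : x ≠ i + 1) (h2 : x ≠ i - 1) :
    ntlGen n i * ntlGen n x = ntlGen n x * ntlGen n i := by
  by_cases hx : x = i
  · subst hx; rfl
  · exact (gen_comm (fun h => h1 (by rw [← h]; ring)) (fun h => h2 (by rw [← h]; ring))).symm

def P (l : List (ZMod n)) : NTL n := (l.map (ntlGen n)).prod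

@[simp] lemma P_nil : P ([] : List (ZMod n)) = 1 := rfl

@[simp] lemma P_cons (x : ZMod n) (l : List (ZMod n)) : P (x :: l) = ntlGen n x * P l := by
  simp [P]

@[simp] lemma P_append (l₁ l₂ : List (ZMod n)) : P (l₁ ++ l₂) = P l₁ * P l₂ := by
  simp [P]

lemma comm_P {i : ZMod n} {l : List (ZMod n)}
    (h : ∀ x ∈ l, x ≠ i + 1 ∧ x ≠ i - 1) :
    ntlGen n i * P l = P l * ntlGen n i := by
  induction l with
  | nil => simp
  | cons y t ih =>
    have hy := h y (by simp)
    have ht : ∀ x ∈ t, x ≠ i + 1 ∧ x ≠ i - 1 := fun x hx => h x (by simp [hx])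
    rw [P_cons, ← mul_assoc, gen_comm' hy.1 hy.2, mul_assoc, ih ht, ← mul_assoc]

lemma exists_first_split {α : Type*} {c : α} : ∀ {l : List α}, c ∈ l →
    ∃ s t, l = s ++ c :: t ∧ c ∉ s := by
  intro l
  induction l with
  | nil => intro h; exact absurd h (by simp)
  | cons y t ih =>
    intro h
    by_cases hy : y = c
    · exact ⟨[], t, by simp [hy], by simp⟩
    · have : c ∈ t := by
        rcases List.mem_cons.mp h with h' | h'
        · exact absurd h'.symm hy
        · exact h'
      obtain ⟨s', t', hst, hcs⟩ := ih this
      refine ⟨y :: s', t', by simp [hst], ?_⟩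
      intro hmem
      rcases List.mem_cons.mp hmem with h' | h'
      · exact hy h'.symm
      · exact hcs h'

/-- Key vanishing lemma: `a_i · v · a_i = 0` when `v` contains no `i` and no `i+1`. -/
lemma sandwich_up : ∀ (N : ℕ) (v : List (ZMod n)), v.length ≤ N → ∀ (i : ZMod n),
    i ∉ v → (i + 1) ∉ v → ntlGen n i * P v * ntlGen n i = 0 := by
  intro N
  induction N with
  | zero =>
    intro v hv i _ _
    have : v = [] := List.eq_nil_of_length_eq_zero (Nat.le_zero.mp hv)
    subst this; simpa using gen_sq i
  | succ N ih =>
    intro v hv i hvi hvi1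
    have key : ntlGen n i * ntlGen n (i - 1) * ntlGen n i = 0 := by
      have := gen_tri2 (i - 1)
      rwa [sub_add_cancel] at this
    by_cases hm : (i - 1) ∈ v
    · obtain ⟨s, t, hst, hcs⟩ := exists_first_split hm
      by_cases hm2 : (i - 1) ∈ t
      · obtain ⟨s2, t2, hst2, hcs2⟩ := exists_first_split hm2
        have hlen : s2.length ≤ N := by
          have h1 := congrArg List.length hst
          have h2 := congrArg List.length hst2
          simp only [List.length_append, List.length_cons] at h1 h2
          omega
        have hmid : ntlGen n (i - 1) * P s2 * ntlGen n (i - 1) = 0 := by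
          apply ih s2 hlen (i - 1)
          · exact hcs2
          · intro hmem
            rw [sub_add_cancel] at hmem
            exact hvi (by rw [hst, hst2]; simp [hmem])
        have hPv : P v = 0 := by
          rw [hst, hst2]
          have : P (s ++ (i - 1) :: (s2 ++ (i - 1) :: t2)) =
              P s * (ntlGen n (i - 1) * P s2 * ntlGen n (i - 1)) * P t2 := by
            simp; noncomm_ring
          rw [this, hmid]; simp
        rw [hPv]; simp
      · have hsprop : ∀ x ∈ s, x ≠ i + 1 ∧ x ≠ i - 1 := by
          intro x hx
          refine ⟨fun h => hvi1 (by rw [hst]; simp [h ▸ hx]), fun h => hcs (h ▸ hx)⟩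
        have htprop : ∀ x ∈ t, x ≠ i + 1 ∧ x ≠ i - 1 := by
          intro x hx
          refine ⟨fun h => hvi1 (by rw [hst]; simp [h ▸ hx]), fun h => hm2 (h ▸ hx)⟩
        rw [hst]
        calc ntlGen n i * P (s ++ (i - 1) :: t) * ntlGen n i
            = (ntlGen n i * P s) * ntlGen n (i - 1) * (P t * ntlGen n i) := by
              simp; noncomm_ring
          _ = (P s * ntlGen n i) * ntlGen n (i - 1) * (ntlGen n i * P t) := by
              rw [comm_P hsprop, ← comm_P htprop]
          _ = P s * (ntlGen n i * ntlGen n (i - 1) * ntlGen n i) * P t := by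
              noncomm_ring
          _ = 0 := by rw [key]; simp
    · have hprop : ∀ x ∈ v, x ≠ i + 1 ∧ x ≠ i - 1 := by
        intro x hx
        exact ⟨fun h => hvi1 (h ▸ hx), fun h => hm (h ▸ hx)⟩
      rw [comm_P hprop, mul_assoc, gen_sq, mul_zero]

end NTLProof
namespace NTLProof

variable {n : ℕ} [NeZero n]

/-- Mirror vanishing lemma: `a_i · v · a_i = 0` when `v` contains no `i` and no `i-1`. -/
lemma sandwich_down : ∀ (N : ℕ) (v : List (ZMod n)), v.length ≤ N → ∀ (i : ZMod n),
    i ∉ v → (i - 1) ∉ v → ntlGen n i * P v * ntlGen n i = 0 := by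
  intro N
  induction N with
  | zero =>
    intro v hv i _ _
    have : v = [] := List.eq_nil_of_length_eq_zero (Nat.le_zero.mp hv)
    subst this; simpa using gen_sq i
  | succ N ih =>
    intro v hv i hvi hvi1
    have key : ntlGen n i * ntlGen n (i + 1) * ntlGen n i = 0 := gen_tri1 i
    by_cases hm : (i + 1) ∈ v
    · obtain ⟨s, t, hst, hcs⟩ := exists_first_split hm
      by_cases hm2 : (i + 1) ∈ t
      · obtain ⟨s2, t2, hst2, hcs2⟩ := exists_first_split hm2
        have hlen : s2.length ≤ N := by
          have h1 := congrArg List.length hst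
          have h2 := congrArg List.length hst2
          simp only [List.length_append, List.length_cons] at h1 h2
          omega
        have hmid : ntlGen n (i + 1) * P s2 * ntlGen n (i + 1) = 0 := by
          apply ih s2 hlen (i + 1)
          · exact hcs2
          · intro hmem
            rw [add_sub_cancel_right] at hmem
            exact hvi (by rw [hst, hst2]; simp [hmem])
        have hPv : P v = 0 := by
          rw [hst, hst2]
          have : P (s ++ (i + 1) :: (s2 ++ (i + 1) :: t2)) =
              P s * (ntlGen n (i + 1) * P s2 * ntlGen n (i + 1)) * P t2 := by
            simp; noncomm_ring
          rw [this, hmid]; simp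
        rw [hPv]; simp
      · have hsprop : ∀ x ∈ s, x ≠ i + 1 ∧ x ≠ i - 1 := by
          intro x hx
          refine ⟨fun h => hcs (h ▸ hx), fun h => hvi1 (by rw [hst]; simp [h ▸ hx])⟩
        have htprop : ∀ x ∈ t, x ≠ i + 1 ∧ x ≠ i - 1 := by
          intro x hx
          refine ⟨fun h => hm2 (h ▸ hx), fun h => hvi1 (by rw [hst]; simp [h ▸ hx])⟩
        rw [hst]
        calc ntlGen n i * P (s ++ (i + 1) :: t) * ntlGen n i
            = (ntlGen n i * P s) * ntlGen n (i + 1) * (P t * ntlGen n i) := by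
              simp; noncomm_ring
          _ = (P s * ntlGen n i) * ntlGen n (i + 1) * (ntlGen n i * P t) := by
              rw [comm_P hsprop, ← comm_P htprop]
          _ = P s * (ntlGen n i * ntlGen n (i + 1) * ntlGen n i) * P t := by
              noncomm_ring
          _ = 0 := by rw [key]; simp
    · have hprop : ∀ x ∈ v, x ≠ i + 1 ∧ x ≠ i - 1 := by
        intro x hx
        exact ⟨fun h => hm (h ▸ hx), fun h => hvi1 (h ▸ hx)⟩
      rw [comm_P hprop, mul_assoc, gen_sq, mul_zero]

/-- `P (u ++ i :: v ++ i :: w) = 0` when `v` avoids `i` and `i+1`. -/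
lemma P_sandwich_up {i : ZMod n} {u v w : List (ZMod n)}
    (h1 : i ∉ v) (h2 : (i + 1) ∉ v) :
    P (u ++ i :: (v ++ i :: w)) = 0 := by
  have : P (u ++ i :: (v ++ i :: w)) =
      P u * (ntlGen n i * P v * ntlGen n i) * P w := by simp; noncomm_ring
  rw [this, sandwich_up v.length v le_rfl i h1 h2]; simp

lemma P_sandwich_down {i : ZMod n} {u v w : List (ZMod n)}
    (h1 : i ∉ v) (h2 : (i - 1) ∉ v) :
    P (u ++ i :: (v ++ i :: w)) = 0 := by
  have : P (u ++ i :: (v ++ i :: w)) =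
      P u * (ntlGen n i * P v * ntlGen n i) * P w := by simp; noncomm_ring
  rw [this, sandwich_down v.length v le_rfl i h1 h2]; simp

lemma gen_comm_P {x : ZMod n} {l : List (ZMod n)}
    (h : ∀ y ∈ l, ntlGen n x * ntlGen n y = ntlGen n y * ntlGen n x) :
    ntlGen n x * P l = P l * ntlGen n x := by
  induction l with
  | nil => simp
  | cons z tz ih =>
    rw [P_cons, ← mul_assoc, h z (by simp), mul_assoc, ih (fun y hy => h y (by simp [hy])),
      ← mul_assoc]

lemma P_blocks_comm {l₁ l₂ : List (ZMod n)}
    (h : ∀ x ∈ l₁, ∀ y ∈ l₂, ntlGen n x * ntlGen n y = ntlGen n y * ntlGen n x) :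
    P l₁ * P l₂ = P l₂ * P l₁ := by
  induction l₁ with
  | nil => simp
  | cons x t ih =>
    rw [P_cons, mul_assoc, ih (fun a ha y hy => h a (by simp [ha]) y hy), ← mul_assoc,
      gen_comm_P (fun y hy => h x (by simp) y hy), mul_assoc]

end NTLProof
namespace NTLProof

variable {n : ℕ} [NeZero n]

lemma npos : 0 < n := Nat.pos_of_ne_zero (NeZero.ne n)

lemma cast_eq_of_mod {a b : ℕ} (h : a % n = b % n) : (a : ZMod n) = b := by
  rw [ZMod.natCast_eq_natCast_iff]; exact h

lemma cast_ne_of {a b : ℕ} (ha : a < n) (hb : b < n) (h : a ≠ b) :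
    (a : ZMod n) ≠ (b : ZMod n) := fun he =>
  h (by rw [← ZMod.val_cast_of_lt (n := n) ha, he, ZMod.val_cast_of_lt hb])

lemma shift_ne (t : ZMod n) {a b : ℕ} (ha : a < n) (hb : b < n) (h : a ≠ b) :
    t + (a : ZMod n) ≠ t + (b : ZMod n) := fun he =>
  cast_ne_of ha hb h (by exact add_left_cancel he)

/-- the positions list for `cwProdAt` (descending `t+n-1, …, t+1`), filtered by `I`. -/
def Dlist (t : ZMod n) (I : Finset (ZMod n)) : List (ZMod n) :=
  ((List.range (n - 1)).map (fun s => t + ((n - 1 - s : ℕ) : ZMod n))).filter (· ∈ I)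

/-- the positions list for `ccwProdAt` (ascending `t+1, …, t+n-1`), filtered by `I`. -/
def Ulist (t : ZMod n) (I : Finset (ZMod n)) : List (ZMod n) :=
  ((List.range (n - 1)).map (fun s => t + ((s + 1 : ℕ) : ZMod n))).filter (· ∈ I)

lemma prod_ite_eq_P (f : ℕ → ZMod n) (l : List ℕ) (I : Finset (ZMod n)) :
    ((l.map (fun s => if f s ∈ I then ntlGen n (f s) else 1)).prod
      = P (((l.map f).filter (· ∈ I)))) := by
  induction l with
  | nil => rfl
  | cons x tl ih =>
    by_cases hx : f x ∈ I
    · simp [hx, ih, P]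
    · simp [hx, ih]

lemma cwProdAt_eq (t : ZMod n) (I : Finset (ZMod n)) :
    cwProdAt n t I = P (Dlist t I) := by
  rw [cwProdAt, Dlist, prod_ite_eq_P]

lemma ccwProdAt_eq (t : ZMod n) (I : Finset (ZMod n)) :
    ccwProdAt n t I = P (Ulist t I) := by
  rw [ccwProdAt, Ulist, prod_ite_eq_P]

/-- lower-arc part (positions `t+1 … t+(d-1)`), in D (descending) order. -/
def DB (t : ZMod n) (d : ℕ) (I : Finset (ZMod n)) : List (ZMod n) :=
  ((List.range (d - 1)).map (fun s => t + ((d - 1 - s : ℕ) : ZMod n))).filter (· ∈ I)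

/-- upper-arc part (positions `t+(d+1) … t+(n-1)`), in D (descending) order. -/
def DA (t : ZMod n) (d : ℕ) (I : Finset (ZMod n)) : List (ZMod n) :=
  ((List.range (n - 1 - d)).map (fun s => t + ((n - 1 - s : ℕ) : ZMod n))).filter (· ∈ I)

/-- lower-arc part, in U (ascending) order. -/
def UA (t : ZMod n) (d : ℕ) (I : Finset (ZMod n)) : List (ZMod n) :=
  ((List.range (d - 1)).map (fun s => t + ((s + 1 : ℕ) : ZMod n))).filter (· ∈ I)

/-- upper-arc part, in U (ascending) order. -/
def UB (t : ZMod n) (d : ℕ) (I : Finset (ZMod n)) : List (ZMod n) :=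
  ((List.range (n - 1 - d)).map (fun s => t + ((d + s + 1 : ℕ) : ZMod n))).filter (· ∈ I)

lemma Dlist_split (t : ZMod n) (I : Finset (ZMod n)) {d : ℕ} (hd1 : 1 ≤ d) (hd2 : d ≤ n - 1) :
    Dlist t I = DA t d I
      ++ ((if (t + (d : ZMod n)) ∈ I then [t + (d : ZMod n)] else []) ++ DB t d I) := by
  have hsplit : List.range (n - 1)
      = List.range (n - 1 - d) ++ (0 :: (List.range (d - 1)).map Nat.succ).map ((n - 1 - d) + ·) := by
    rw [← List.range_succ_eq_map, ← List.range_add]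
    congr 1
    omega
  have hmap : (List.range (n - 1)).map (fun s => t + ((n - 1 - s : ℕ) : ZMod n))
      = ((List.range (n - 1 - d)).map (fun s => t + ((n - 1 - s : ℕ) : ZMod n)))
        ++ (t + (d : ZMod n))
          :: ((List.range (d - 1)).map (fun s => t + ((d - 1 - s : ℕ) : ZMod n))) := by
    rw [hsplit, List.map_append]
    congr 1
    simp only [List.map_cons, List.map_map]
    congr 1
    · show t + ((n - 1 - (n - 1 - d + 0) : ℕ) : ZMod n) = t + ((d : ℕ) : ZMod n)
      congr 2
      omega
    · apply List.map_congr_left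
      intro s hs
      simp only [List.mem_range] at hs
      simp only [Function.comp]
      congr 2
      omega
  rw [Dlist, hmap, List.filter_append, List.filter_cons]
  by_cases hc : (t + (d : ZMod n)) ∈ I <;> simp [hc, DA, DB]

lemma Ulist_split (t : ZMod n) (I : Finset (ZMod n)) {d : ℕ} (hd1 : 1 ≤ d) (hd2 : d ≤ n - 1) :
    Ulist t I = UA t d I
      ++ ((if (t + (d : ZMod n)) ∈ I then [t + (d : ZMod n)] else []) ++ UB t d I) := by
  have hsplit : List.range (n - 1)
      = List.range (d - 1) ++ (0 :: (List.range (n - 1 - d)).map Nat.succ).map ((d - 1) + ·) := by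
    rw [← List.range_succ_eq_map, ← List.range_add]
    congr 1
    omega
  have hmap : (List.range (n - 1)).map (fun s => t + ((s + 1 : ℕ) : ZMod n))
      = ((List.range (d - 1)).map (fun s => t + ((s + 1 : ℕ) : ZMod n)))
        ++ (t + (d : ZMod n))
          :: ((List.range (n - 1 - d)).map (fun s => t + ((d + s + 1 : ℕ) : ZMod n))) := by
    rw [hsplit, List.map_append]
    congr 1
    simp only [List.map_cons, List.map_map]
    congr 1
    · show t + ((d - 1 + 0 + 1 : ℕ) : ZMod n) = t + ((d : ℕ) : ZMod n)
      congr 2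
      omega
    · apply List.map_congr_left
      intro s hs
      simp only [List.mem_range] at hs
      simp only [Function.comp]
      congr 2
      omega
  rw [Ulist, hmap, List.filter_append, List.filter_cons]
  by_cases hc : (t + (d : ZMod n)) ∈ I <;> simp [hc, UA, UB]

lemma mem_DB {t : ZMod n} {d : ℕ} {I : Finset (ZMod n)} {x : ZMod n} (hx : x ∈ DB t d I) :
    x ∈ I ∧ ∃ k : ℕ, 1 ≤ k ∧ k ≤ d - 1 ∧ x = t + (k : ZMod n) := by
  rw [DB, List.mem_filter] at hx
  obtain ⟨hx1, hx2⟩ := hx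
  refine ⟨by simpa using hx2, ?_⟩
  obtain ⟨s, hs, rfl⟩ := List.mem_map.mp hx1
  rw [List.mem_range] at hs
  exact ⟨d - 1 - s, by omega, by omega, rfl⟩

lemma mem_DA {t : ZMod n} {d : ℕ} {I : Finset (ZMod n)} {x : ZMod n} (hx : x ∈ DA t d I)
    (hd2 : d ≤ n - 1) :
    x ∈ I ∧ ∃ k : ℕ, d + 1 ≤ k ∧ k ≤ n - 1 ∧ x = t + (k : ZMod n) := by
  rw [DA, List.mem_filter] at hx
  obtain ⟨hx1, hx2⟩ := hx
  refine ⟨by simpa using hx2, ?_⟩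
  obtain ⟨s, hs, rfl⟩ := List.mem_map.mp hx1
  rw [List.mem_range] at hs
  exact ⟨n - 1 - s, by omega, by omega, rfl⟩

lemma mem_UA {t : ZMod n} {d : ℕ} {I : Finset (ZMod n)} {x : ZMod n} (hx : x ∈ UA t d I) :
    x ∈ I ∧ ∃ k : ℕ, 1 ≤ k ∧ k ≤ d - 1 ∧ x = t + (k : ZMod n) := by
  rw [UA, List.mem_filter] at hx
  obtain ⟨hx1, hx2⟩ := hx
  refine ⟨by simpa using hx2, ?_⟩
  obtain ⟨s, hs, rfl⟩ := List.mem_map.mp hx1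
  rw [List.mem_range] at hs
  exact ⟨s + 1, by omega, by omega, rfl⟩

lemma mem_UB {t : ZMod n} {d : ℕ} {I : Finset (ZMod n)} {x : ZMod n} (hx : x ∈ UB t d I)
    (hd2 : d ≤ n - 1) :
    x ∈ I ∧ ∃ k : ℕ, d + 1 ≤ k ∧ k ≤ n - 1 ∧ x = t + (k : ZMod n) := by
  rw [UB, List.mem_filter] at hx
  obtain ⟨hx1, hx2⟩ := hx
  refine ⟨by simpa using hx2, ?_⟩
  obtain ⟨s, hs, rfl⟩ := List.mem_map.mp hx1
  rw [List.mem_range] at hs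
  exact ⟨d + s + 1, by omega, by omega, rfl⟩

/-- elements of the lower arc differ from `c = t+d` and from `c+1`. -/
lemma lowArc_ne {t : ZMod n} {k d : ℕ} (hk1 : 1 ≤ k) (hk2 : k ≤ d - 1)
    (hd1 : 1 ≤ d) (hd2 : d ≤ n - 1) :
    t + (k : ZMod n) ≠ t + (d : ZMod n) ∧ t + (k : ZMod n) ≠ t + (d : ZMod n) + 1 := by
  have hn := npos (n := n)
  constructor
  · exact shift_ne t (by omega) (by omega) (by omega)
  · have hcast : ((d : ℕ) : ZMod n) + 1 = ((d + 1 : ℕ) : ZMod n) := by push_cast; ring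
    by_cases hdn : d + 1 < n
    · rw [add_assoc, hcast]
      exact shift_ne t (by omega) hdn (by omega)
    · have hzero : ((d : ℕ) : ZMod n) + 1 = ((0 : ℕ) : ZMod n) := by
        rw [hcast]
        have h : d + 1 = n := by omega
        exact cast_eq_of_mod (by rw [h]; simp [Nat.mod_self])
      rw [add_assoc, hzero]
      exact shift_ne t (by omega) npos (by omega)

/-- elements of the upper arc differ from `c = t+d` and from `c-1`. -/
lemma highArc_ne {t : ZMod n} {k d : ℕ} (hk1 : d + 1 ≤ k) (hk2 : k ≤ n - 1)
    (hd1 : 1 ≤ d) :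
    t + (k : ZMod n) ≠ t + (d : ZMod n) ∧ t + (k : ZMod n) ≠ t + (d : ZMod n) - 1 := by
  have hn := npos (n := n)
  constructor
  · exact shift_ne t (by omega) (by omega) (by omega)
  · have : t + (d : ZMod n) - 1 = t + ((d - 1 : ℕ) : ZMod n) := by
      have : ((d - 1 : ℕ) : ZMod n) = (d : ZMod n) - 1 := by
        have : ((d - 1 : ℕ) : ZMod n) + 1 = ((d : ℕ) : ZMod n) := by
          rw [show ((d - 1 : ℕ) : ZMod n) + 1 = ((d - 1 + 1 : ℕ) : ZMod n) by push_cast; ring]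
          congr 1; omega
        linear_combination this
      rw [this]; ring
    rw [this]
    exact shift_ne t (by omega) (by omega) (by omega)

end NTLProof
namespace NTLProof

variable {n : ℕ} [NeZero n]

lemma add_one_form (t : ZMod n) (d : ℕ) :
    t + (d : ZMod n) + 1 = t + (((d + 1) % n : ℕ) : ZMod n) := by
  rw [add_assoc]
  congr 1
  have h : ((d : ZMod n) + 1) = ((d + 1 : ℕ) : ZMod n) := by push_cast; ring
  rw [h]
  exact cast_eq_of_mod (Nat.mod_mod_of_dvd (d+1) dvd_rfl).symm

lemma sub_one_form (t : ZMod n) {d : ℕ} (h1 : 1 ≤ d) :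
    t + (d : ZMod n) - 1 = t + ((d - 1 : ℕ) : ZMod n) := by
  have h : ((d - 1 : ℕ) : ZMod n) = (d : ZMod n) - 1 := by
    have h2 : ((d - 1 : ℕ) : ZMod n) + 1 = ((d : ℕ) : ZMod n) := by
      rw [show ((d - 1 : ℕ) : ZMod n) + 1 = ((d - 1 + 1 : ℕ) : ZMod n) by push_cast; ring]
      congr 1
      omega
    linear_combination h2
  rw [h]
  ring

lemma arc_comm (t : ZMod n) {k₁ k₂ : ℕ} (h1 : k₂ + 2 ≤ k₁) (h2 : k₁ ≤ n - 1) (h3 : 1 ≤ k₂) :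
    ntlGen n (t + (k₁ : ZMod n)) * ntlGen n (t + (k₂ : ZMod n))
      = ntlGen n (t + (k₂ : ZMod n)) * ntlGen n (t + (k₁ : ZMod n)) := by
  have hn := npos (n := n)
  apply gen_comm'
  · rw [add_one_form]
    by_cases hk : k₁ + 1 = n
    · have : (k₁ + 1) % n = 0 := by rw [hk]; exact Nat.mod_self n
      rw [this]
      exact shift_ne t (by omega) (by omega) (by omega)
    · have : (k₁ + 1) % n = k₁ + 1 := Nat.mod_eq_of_lt (by omega)
      rw [this]
      exact shift_ne t (by omega) (by omega) (by omega)
  · rw [sub_one_form t (by omega)]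
    exact shift_ne t (by omega) (by omega) (by omega)

lemma val_sub_form {t t' : ZMod n} (h : t ≠ t') : t' = t + (((t' - t).val : ℕ) : ZMod n) ∧
    1 ≤ (t' - t).val ∧ (t' - t).val ≤ n - 1 := by
  have hn := npos (n := n)
  have hval : (((t' - t).val : ℕ) : ZMod n) = t' - t := ZMod.natCast_rightInverse _
  refine ⟨by rw [hval]; ring, ?_, ?_⟩
  · rcases Nat.eq_zero_or_pos (t' - t).val with h0 | h0
    · exfalso
      have : t' - t = 0 := by rwa [ZMod.val_eq_zero] at h0
      exact h (by linear_combination this.symm)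
    · omega
  · have := ZMod.val_lt (t' - t)
    omega

/-- arc-decomposition identification used for base-point independence. -/
lemma DA_flip (t : ZMod n) {d : ℕ} (hd1 : 1 ≤ d) (hd2 : d ≤ n - 1) (I : Finset (ZMod n)) :
    DA (t + (d : ZMod n)) (n - d) I = DB t d I := by
  rw [DA, DB]
  congr 1
  rw [show n - 1 - (n - d) = d - 1 from by omega]
  apply List.map_congr_left
  intro s hs
  simp only [List.mem_range] at hs
  calc t + (d : ZMod n) + ((n - 1 - s : ℕ) : ZMod n)
      = t + ((d + (n - 1 - s) : ℕ) : ZMod n) := by push_cast; ring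
    _ = t + ((d - 1 - s + n : ℕ) : ZMod n) := by rw [show d + (n - 1 - s) = d - 1 - s + n from by omega]
    _ = t + ((d - 1 - s : ℕ) : ZMod n) := by push_cast [ZMod.natCast_self]; ring

lemma DB_flip (t : ZMod n) {d : ℕ} (hd1 : 1 ≤ d) (hd2 : d ≤ n - 1) (I : Finset (ZMod n)) :
    DB (t + (d : ZMod n)) (n - d) I = DA t d I := by
  rw [DA, DB]
  congr 1
  rw [show n - d - 1 = n - 1 - d from by omega]
  apply List.map_congr_left
  intro s hs
  simp only [List.mem_range] at hs
  calc t + (d : ZMod n) + ((n - 1 - d - s : ℕ) : ZMod n)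
      = t + ((d + (n - 1 - d - s) : ℕ) : ZMod n) := by push_cast; ring
    _ = t + ((n - 1 - s : ℕ) : ZMod n) := by rw [show d + (n - 1 - d - s) = n - 1 - s from by omega]

lemma UA_flip (t : ZMod n) {d : ℕ} (hd1 : 1 ≤ d) (hd2 : d ≤ n - 1) (I : Finset (ZMod n)) :
    UA (t + (d : ZMod n)) (n - d) I = UB t d I := by
  rw [UA, UB]
  congr 1
  rw [show n - d - 1 = n - 1 - d from by omega]
  apply List.map_congr_left
  intro s hs
  simp only [List.mem_range] at hs
  calc t + (d : ZMod n) + ((s + 1 : ℕ) : ZMod n)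
      = t + ((d + s + 1 : ℕ) : ZMod n) := by push_cast; ring

lemma UB_flip (t : ZMod n) {d : ℕ} (hd1 : 1 ≤ d) (hd2 : d ≤ n - 1) (I : Finset (ZMod n)) :
    UB (t + (d : ZMod n)) (n - d) I = UA t d I := by
  rw [UA, UB]
  congr 1
  rw [show n - 1 - (n - d) = d - 1 from by omega]
  apply List.map_congr_left
  intro s hs
  simp only [List.mem_range] at hs
  calc t + (d : ZMod n) + ((n - d + s + 1 : ℕ) : ZMod n)
      = t + ((d + (n - d + s + 1) : ℕ) : ZMod n) := by push_cast; ring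
    _ = t + ((s + 1 + n : ℕ) : ZMod n) := by rw [show d + (n - d + s + 1) = s + 1 + n from by omega]
    _ = t + ((s + 1 : ℕ) : ZMod n) := by push_cast [ZMod.natCast_self]; ring

lemma arcs_comm (t : ZMod n) {d : ℕ} (hd1 : 1 ≤ d) (hd2 : d ≤ n - 1) (I : Finset (ZMod n)) :
    P (DA t d I) * P (DB t d I) = P (DB t d I) * P (DA t d I) := by
  apply P_blocks_comm
  intro x hx y hy
  obtain ⟨-, k₁, hk1, hk2, rfl⟩ := mem_DA hx hd2
  obtain ⟨-, k₂, hl1, hl2, rfl⟩ := mem_DB hy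
  exact arc_comm t (by omega) (by omega) (by omega)

lemma arcs_comm_U (t : ZMod n) {d : ℕ} (hd1 : 1 ≤ d) (hd2 : d ≤ n - 1) (I : Finset (ZMod n)) :
    P (UA t d I) * P (UB t d I) = P (UB t d I) * P (UA t d I) := by
  apply P_blocks_comm
  intro x hx y hy
  obtain ⟨-, k₂, hl1, hl2, rfl⟩ := mem_UA hx
  obtain ⟨-, k₁, hk1, hk2, rfl⟩ := mem_UB hy hd2
  exact (arc_comm t (by omega) (by omega) (by omega)).symm

lemma cwProdAt_base {t t' : ZMod n} {I : Finset (ZMod n)} (ht : t ∉ I) (ht' : t' ∉ I) :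
    cwProdAt n t I = cwProdAt n t' I := by
  by_cases htt : t = t'
  · rw [htt]
  obtain ⟨hform, hd1, hd2⟩ := val_sub_form htt
  set d := (t' - t).val with hdd
  have hnd1 : 1 ≤ n - d := by omega
  have hnd2 : n - d ≤ n - 1 := by omega
  have hsplit1 : Dlist t I = DA t d I ++ DB t d I := by
    rw [Dlist_split t I hd1 hd2, ← hform, if_neg ht']
    simp
  have hform2 : t = t' + ((n - d : ℕ) : ZMod n) := by
    rw [hform]
    calc t = t + ((d + (n - d) : ℕ) : ZMod n) := by
          rw [show d + (n - d) = n from by omega, ZMod.natCast_self, add_zero]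
      _ = t + (d : ZMod n) + ((n - d : ℕ) : ZMod n) := by push_cast; ring
  have hsplit2 : Dlist t' I = DB t d I ++ DA t d I := by
    rw [Dlist_split t' I hnd1 hnd2, ← hform2, if_neg ht]
    rw [hform, DA_flip t hd1 hd2, DB_flip t hd1 hd2]
    simp
  rw [cwProdAt_eq, cwProdAt_eq, hsplit1, hsplit2, P_append, P_append,
    arcs_comm t hd1 hd2]

lemma ccwProdAt_base {t t' : ZMod n} {I : Finset (ZMod n)} (ht : t ∉ I) (ht' : t' ∉ I) :
    ccwProdAt n t I = ccwProdAt n t' I := by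
  by_cases htt : t = t'
  · rw [htt]
  obtain ⟨hform, hd1, hd2⟩ := val_sub_form htt
  set d := (t' - t).val with hdd
  have hnd1 : 1 ≤ n - d := by omega
  have hnd2 : n - d ≤ n - 1 := by omega
  have hsplit1 : Ulist t I = UA t d I ++ UB t d I := by
    rw [Ulist_split t I hd1 hd2, ← hform, if_neg ht']
    simp
  have hform2 : t = t' + ((n - d : ℕ) : ZMod n) := by
    rw [hform]
    calc t = t + ((d + (n - d) : ℕ) : ZMod n) := by
          rw [show d + (n - d) = n from by omega, ZMod.natCast_self, add_zero]
      _ = t + (d : ZMod n) + ((n - d : ℕ) : ZMod n) := by push_cast; ring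
  have hsplit2 : Ulist t' I = UB t d I ++ UA t d I := by
    rw [Ulist_split t' I hnd1 hnd2, ← hform2, if_neg ht]
    rw [hform, UA_flip t hd1 hd2, UB_flip t hd1 hd2]
    simp
  rw [ccwProdAt_eq, ccwProdAt_eq, hsplit1, hsplit2, P_append, P_append,
    arcs_comm_U t hd1 hd2]

lemma cwProd_eq_at {I : Finset (ZMod n)} {t : ZMod n} (ht : t ∉ I) :
    cwProd n I = cwProdAt n t I := by
  have hex : ∃ t' : ZMod n, t' ∉ I := ⟨t, ht⟩
  rw [cwProd, dif_pos hex]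
  exact cwProdAt_base hex.choose_spec ht

lemma ccwProd_eq_at {I : Finset (ZMod n)} {t : ZMod n} (ht : t ∉ I) :
    ccwProd n I = ccwProdAt n t I := by
  have hex : ∃ t' : ZMod n, t' ∉ I := ⟨t, ht⟩
  rw [ccwProd, dif_pos hex]
  exact ccwProdAt_base hex.choose_spec ht

end NTLProof
namespace NTLProof

variable {n : ℕ} [NeZero n]

lemma mem_Dlist {x t : ZMod n} {I : Finset (ZMod n)} (h : x ∈ Dlist t I) : x ∈ I := by
  rw [Dlist, List.mem_filter] at h
  simpa using h.2

lemma mem_Ulist {x t : ZMod n} {I : Finset (ZMod n)} (h : x ∈ Ulist t I) : x ∈ I := by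
  rw [Ulist, List.mem_filter] at h
  simpa using h.2

lemma DB_ne {t : ZMod n} {d : ℕ} {I : Finset (ZMod n)} (hd1 : 1 ≤ d) (hd2 : d ≤ n - 1) :
    ∀ x ∈ DB t d I, x ≠ t + (d : ZMod n) ∧ x ≠ t + (d : ZMod n) + 1 := by
  intro x hx
  obtain ⟨-, k, hk1, hk2, rfl⟩ := mem_DB hx
  exact lowArc_ne hk1 hk2 hd1 hd2

lemma UA_ne {t : ZMod n} {d : ℕ} {I : Finset (ZMod n)} (hd1 : 1 ≤ d) (hd2 : d ≤ n - 1) :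
    ∀ x ∈ UA t d I, x ≠ t + (d : ZMod n) ∧ x ≠ t + (d : ZMod n) + 1 := by
  intro x hx
  obtain ⟨-, k, hk1, hk2, rfl⟩ := mem_UA hx
  exact lowArc_ne hk1 hk2 hd1 hd2

lemma DA_ne {t : ZMod n} {d : ℕ} {I : Finset (ZMod n)} (hd1 : 1 ≤ d) (hd2 : d ≤ n - 1) :
    ∀ x ∈ DA t d I, x ≠ t + (d : ZMod n) ∧ x ≠ t + (d : ZMod n) - 1 := by
  intro x hx
  obtain ⟨-, k, hk1, hk2, rfl⟩ := mem_DA hx hd2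
  exact highArc_ne hk1 hk2 hd1

lemma UB_ne {t : ZMod n} {d : ℕ} {I : Finset (ZMod n)} (hd1 : 1 ≤ d) (hd2 : d ≤ n - 1) :
    ∀ x ∈ UB t d I, x ≠ t + (d : ZMod n) ∧ x ≠ t + (d : ZMod n) - 1 := by
  intro x hx
  obtain ⟨-, k, hk1, hk2, rfl⟩ := mem_UB hx hd2
  exact highArc_ne hk1 hk2 hd1

lemma DA_mem_I {t : ZMod n} {d : ℕ} {I : Finset (ZMod n)} :
    ∀ x ∈ DA t d I, x ∈ I := by
  intro x hx
  rw [DA, List.mem_filter] at hx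
  simpa using hx.2

lemma UB_mem_I {t : ZMod n} {d : ℕ} {I : Finset (ZMod n)} :
    ∀ x ∈ UB t d I, x ∈ I := by
  intro x hx
  rw [UB, List.mem_filter] at hx
  simpa using hx.2

/-- Claim A: `cw(I) · ccw(J) = 0` as soon as `I ∩ J ≠ ∅`. -/
lemma claimA_at {t1 t2 c : ZMod n} {I J : Finset (ZMod n)}
    (ht1 : t1 ∉ I) (ht2 : t2 ∉ J) (hcI : c ∈ I) (hcJ : c ∈ J) :
    cwProdAt n t1 I * ccwProdAt n t2 J = 0 := by
  obtain ⟨hf1, hd11, hd12⟩ := val_sub_form (show t1 ≠ c from fun h => ht1 (h ▸ hcI))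
  obtain ⟨hf2, hd21, hd22⟩ := val_sub_form (show t2 ≠ c from fun h => ht2 (h ▸ hcJ))
  rw [cwProdAt_eq, ccwProdAt_eq, Dlist_split t1 I hd11 hd12, Ulist_split t2 J hd21 hd22,
    ← hf1, ← hf2, if_pos hcI, if_pos hcJ, ← P_append]
  have hli : (DA t1 ((c - t1).val) I ++ ([c] ++ DB t1 ((c - t1).val) I))
        ++ (UA t2 ((c - t2).val) J ++ ([c] ++ UB t2 ((c - t2).val) J))
      = DA t1 ((c - t1).val) I
        ++ c :: ((DB t1 ((c - t1).val) I ++ UA t2 ((c - t2).val) J)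
          ++ c :: UB t2 ((c - t2).val) J) := by simp
  rw [hli]
  apply P_sandwich_up
  · intro hmem
    rcases List.mem_append.mp hmem with h | h
    · exact (DB_ne hd11 hd12 c h).1 hf1
    · exact (UA_ne hd21 hd22 c h).1 hf2
  · intro hmem
    rcases List.mem_append.mp hmem with h | h
    · exact (DB_ne hd11 hd12 _ h).2 (congrArg (fun x => x + 1) hf1)
    · exact (UA_ne hd21 hd22 _ h).2 (congrArg (fun x => x + 1) hf2)

lemma gen_eq_P (j : ZMod n) : ntlGen n j = P [j] := by simp

/-- L2: `w_I · a_j = 0` unless `j ∈ I` and `j+1 ∉ I`. -/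
lemma L2_at {t1 t2 j : ZMod n} {I : Finset (ZMod n)}
    (ht1 : t1 ∉ I) (ht2 : t2 ∉ Iᶜ) (hbad : ¬(j ∈ I ∧ j + 1 ∉ I)) :
    cwProdAt n t1 I * ccwProdAt n t2 Iᶜ * ntlGen n j = 0 := by
  by_cases hj : j ∈ I
  · have hj1 : j + 1 ∈ I := by
      by_contra h
      exact hbad ⟨hj, h⟩
    obtain ⟨hf1, hd11, hd12⟩ := val_sub_form (show t1 ≠ j from fun h => ht1 (h ▸ hj))
    rw [cwProdAt_eq, ccwProdAt_eq, Dlist_split t1 I hd11 hd12, ← hf1, if_pos hj,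
      gen_eq_P, ← P_append, ← P_append]
    have hli : (DA t1 ((j - t1).val) I ++ ([j] ++ DB t1 ((j - t1).val) I)) ++ Ulist t2 Iᶜ ++ [j]
        = DA t1 ((j - t1).val) I
          ++ j :: ((DB t1 ((j - t1).val) I ++ Ulist t2 Iᶜ) ++ j :: []) := by simp
    rw [hli]
    apply P_sandwich_up
    · intro hmem
      rcases List.mem_append.mp hmem with h | h
      · exact (DB_ne hd11 hd12 j h).1 hf1
      · exact (Finset.mem_compl.mp (mem_Ulist h)) hj
    · intro hmem
      rcases List.mem_append.mp hmem with h | h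
      · exact (DB_ne hd11 hd12 _ h).2 (congrArg (fun x => x + 1) hf1)
      · exact (Finset.mem_compl.mp (mem_Ulist h)) hj1
  · have hjc : j ∈ Iᶜ := Finset.mem_compl.mpr hj
    obtain ⟨hf2, hd21, hd22⟩ := val_sub_form (show t2 ≠ j from fun h => ht2 (h ▸ hjc))
    rw [cwProdAt_eq, ccwProdAt_eq, Ulist_split t2 Iᶜ hd21 hd22, ← hf2, if_pos hjc,
      gen_eq_P, ← P_append, ← P_append]
    have hli : Dlist t1 I ++ (UA t2 ((j - t2).val) Iᶜ ++ ([j] ++ UB t2 ((j - t2).val) Iᶜ)) ++ [j]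
        = (Dlist t1 I ++ UA t2 ((j - t2).val) Iᶜ)
          ++ j :: (UB t2 ((j - t2).val) Iᶜ ++ j :: []) := by simp
    rw [hli]
    apply P_sandwich_down
    · intro hmem
      exact (UB_ne hd21 hd22 j hmem).1 hf2
    · intro hmem
      exact (UB_ne hd21 hd22 _ hmem).2 (congrArg (fun x => x - 1) hf2)

/-- L1: `a_j · w_I = 0` unless `j ∉ I` and `j+1 ∈ I`. -/
lemma L1_at {t1 t2 j : ZMod n} {I : Finset (ZMod n)}
    (ht1 : t1 ∉ I) (ht2 : t2 ∉ Iᶜ) (hbad : ¬(j ∉ I ∧ j + 1 ∈ I)) :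
    ntlGen n j * (cwProdAt n t1 I * ccwProdAt n t2 Iᶜ) = 0 := by
  by_cases hj : j ∈ I
  · obtain ⟨hf1, hd11, hd12⟩ := val_sub_form (show t1 ≠ j from fun h => ht1 (h ▸ hj))
    rw [cwProdAt_eq, ccwProdAt_eq, Dlist_split t1 I hd11 hd12, ← hf1, if_pos hj,
      gen_eq_P, ← P_append, ← P_append]
    have hli : [j] ++ ((DA t1 ((j - t1).val) I ++ ([j] ++ DB t1 ((j - t1).val) I)) ++ Ulist t2 Iᶜ)
        = [] ++ j :: (DA t1 ((j - t1).val) I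
          ++ j :: (DB t1 ((j - t1).val) I ++ Ulist t2 Iᶜ)) := by simp
    rw [hli]
    apply P_sandwich_down
    · intro hmem
      exact (DA_ne hd11 hd12 j hmem).1 hf1
    · intro hmem
      exact (DA_ne hd11 hd12 _ hmem).2 (congrArg (fun x => x - 1) hf1)
  · have hj1 : j + 1 ∉ I := by
      by_contra h
      exact hbad ⟨hj, h⟩
    have hjc : j ∈ Iᶜ := Finset.mem_compl.mpr hj
    obtain ⟨hf2, hd21, hd22⟩ := val_sub_form (show t2 ≠ j from fun h => ht2 (h ▸ hjc))
    rw [cwProdAt_eq, ccwProdAt_eq, Ulist_split t2 Iᶜ hd21 hd22, ← hf2, if_pos hjc,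
      gen_eq_P, ← P_append, ← P_append]
    have hli : [j] ++ (Dlist t1 I ++ (UA t2 ((j - t2).val) Iᶜ ++ ([j] ++ UB t2 ((j - t2).val) Iᶜ)))
        = [] ++ j :: ((Dlist t1 I ++ UA t2 ((j - t2).val) Iᶜ)
          ++ j :: UB t2 ((j - t2).val) Iᶜ) := by simp
    rw [hli]
    apply P_sandwich_up
    · intro hmem
      rcases List.mem_append.mp hmem with h | h
      · exact hj (mem_Dlist h)
      · exact (UA_ne hd21 hd22 j h).1 hf2
    · intro hmem
      rcases List.mem_append.mp hmem with h | h
      · exact hj1 (mem_Dlist h)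
      · exact (UA_ne hd21 hd22 _ h).2 (congrArg (fun x => x + 1) hf2)

end NTLProof
namespace NTLProof

variable {n : ℕ} [NeZero n]

/-- `w_I · w_{I'} = 0` for `I ≠ I'`. -/
lemma orth_at {t1 t2 t3 t4 : ZMod n} {I I' : Finset (ZMod n)}
    (ht1 : t1 ∉ I) (ht2 : t2 ∉ Iᶜ) (ht3 : t3 ∉ I') (ht4 : t4 ∉ I'ᶜ) (hne : I ≠ I') :
    (cwProdAt n t1 I * ccwProdAt n t2 Iᶜ) * (cwProdAt n t3 I' * ccwProdAt n t4 I'ᶜ) = 0 := by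
  by_cases hss : ∃ c, c ∈ I' ∧ c ∉ I
  · obtain ⟨c, hcI', hcnI⟩ := hss
    have hcIc : c ∈ Iᶜ := Finset.mem_compl.mpr hcnI
    obtain ⟨hf2, hd21, hd22⟩ := val_sub_form (show t2 ≠ c from fun h => ht2 (h ▸ hcIc))
    obtain ⟨hf3, hd31, hd32⟩ := val_sub_form (show t3 ≠ c from fun h => ht3 (h ▸ hcI'))
    rw [cwProdAt_eq t1, ccwProdAt_eq t2, cwProdAt_eq t3, ccwProdAt_eq t4,
      Ulist_split t2 Iᶜ hd21 hd22, Dlist_split t3 I' hd31 hd32, ← hf2, ← hf3,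
      if_pos hcIc, if_pos hcI', ← P_append, ← P_append, ← P_append]
    have hli : Dlist t1 I ++ (UA t2 ((c - t2).val) Iᶜ ++ ([c] ++ UB t2 ((c - t2).val) Iᶜ))
          ++ ((DA t3 ((c - t3).val) I' ++ ([c] ++ DB t3 ((c - t3).val) I')) ++ Ulist t4 I'ᶜ)
        = (Dlist t1 I ++ UA t2 ((c - t2).val) Iᶜ)
          ++ c :: ((UB t2 ((c - t2).val) Iᶜ ++ DA t3 ((c - t3).val) I')
            ++ c :: (DB t3 ((c - t3).val) I' ++ Ulist t4 I'ᶜ)) := by simp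
    rw [hli]
    apply P_sandwich_down
    · intro hmem
      rcases List.mem_append.mp hmem with h | h
      · exact (UB_ne hd21 hd22 c h).1 hf2
      · exact (DA_ne hd31 hd32 c h).1 hf3
    · intro hmem
      rcases List.mem_append.mp hmem with h | h
      · exact (UB_ne hd21 hd22 _ h).2 (congrArg (fun x => x - 1) hf2)
      · exact (DA_ne hd31 hd32 _ h).2 (congrArg (fun x => x - 1) hf3)
  · have hsub : I' ⊆ I := by
      intro x hx
      by_contra hxn
      exact hss ⟨x, hx, hxn⟩
    obtain ⟨y, hyI, hynI'⟩ : ∃ y, y ∈ I ∧ y ∉ I' := by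
      by_contra h
      push_neg at h
      exact hne (le_antisymm h hsub)
    set c := y - 1 with hcdef
    have hc1 : c + 1 = y := sub_add_cancel y 1
    have hy1I : c + 1 ∈ I := by rw [hc1]; exact hyI
    have hy1nI' : c + 1 ∉ I' := by rw [hc1]; exact hynI'
    by_cases hcI : c ∈ I
    · obtain ⟨hf1, hd11, hd12⟩ := val_sub_form (show t1 ≠ c from fun h => ht1 (h ▸ hcI))
      by_cases hcI' : c ∈ I'
      · obtain ⟨hf3, hd31, hd32⟩ := val_sub_form (show t3 ≠ c from fun h => ht3 (h ▸ hcI'))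
        rw [cwProdAt_eq t1, ccwProdAt_eq t2, cwProdAt_eq t3, ccwProdAt_eq t4,
          Dlist_split t1 I hd11 hd12, Dlist_split t3 I' hd31 hd32, ← hf1, ← hf3,
          if_pos hcI, if_pos hcI', ← P_append, ← P_append, ← P_append]
        have hli : (DA t1 ((c - t1).val) I ++ ([c] ++ DB t1 ((c - t1).val) I)) ++ Ulist t2 Iᶜ
              ++ ((DA t3 ((c - t3).val) I' ++ ([c] ++ DB t3 ((c - t3).val) I')) ++ Ulist t4 I'ᶜ)
            = DA t1 ((c - t1).val) I
              ++ c :: ((DB t1 ((c - t1).val) I ++ Ulist t2 Iᶜ ++ DA t3 ((c - t3).val) I')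
                ++ c :: (DB t3 ((c - t3).val) I' ++ Ulist t4 I'ᶜ)) := by simp
        rw [hli]
        apply P_sandwich_up
        · intro hmem
          rcases List.mem_append.mp hmem with h | h
          · rcases List.mem_append.mp h with h' | h'
            · exact (DB_ne hd11 hd12 c h').1 hf1
            · exact Finset.mem_compl.mp (mem_Ulist h') hcI
          · exact (DA_ne hd31 hd32 c h).1 hf3
        · intro hmem
          rcases List.mem_append.mp hmem with h | h
          · rcases List.mem_append.mp h with h' | h'
            · exact (DB_ne hd11 hd12 _ h').2 (congrArg (fun x => x + 1) hf1)
            · exact Finset.mem_compl.mp (mem_Ulist h') hy1I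
          · exact hy1nI' (DA_mem_I _ h)
      · have hcI'c : c ∈ I'ᶜ := Finset.mem_compl.mpr hcI'
        obtain ⟨hf4, hd41, hd42⟩ := val_sub_form (show t4 ≠ c from fun h => ht4 (h ▸ hcI'c))
        rw [cwProdAt_eq t1, ccwProdAt_eq t2, cwProdAt_eq t3, ccwProdAt_eq t4,
          Dlist_split t1 I hd11 hd12, Ulist_split t4 I'ᶜ hd41 hd42, ← hf1, ← hf4,
          if_pos hcI, if_pos hcI'c, ← P_append, ← P_append, ← P_append]
        have hli : (DA t1 ((c - t1).val) I ++ ([c] ++ DB t1 ((c - t1).val) I)) ++ Ulist t2 Iᶜ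
              ++ (Dlist t3 I' ++ (UA t4 ((c - t4).val) I'ᶜ ++ ([c] ++ UB t4 ((c - t4).val) I'ᶜ)))
            = DA t1 ((c - t1).val) I
              ++ c :: ((DB t1 ((c - t1).val) I ++ Ulist t2 Iᶜ ++ Dlist t3 I'
                ++ UA t4 ((c - t4).val) I'ᶜ)
                ++ c :: UB t4 ((c - t4).val) I'ᶜ) := by simp
        rw [hli]
        apply P_sandwich_up
        · intro hmem
          rcases List.mem_append.mp hmem with h | h
          · rcases List.mem_append.mp h with h' | h'
            · rcases List.mem_append.mp h' with h'' | h''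
              · exact (DB_ne hd11 hd12 c h'').1 hf1
              · exact Finset.mem_compl.mp (mem_Ulist h'') hcI
            · exact hcI' (mem_Dlist h')
          · exact (UA_ne hd41 hd42 c h).1 hf4
        · intro hmem
          rcases List.mem_append.mp hmem with h | h
          · rcases List.mem_append.mp h with h' | h'
            · rcases List.mem_append.mp h' with h'' | h''
              · exact (DB_ne hd11 hd12 _ h'').2 (congrArg (fun x => x + 1) hf1)
              · exact Finset.mem_compl.mp (mem_Ulist h'') hy1I
            · exact hy1nI' (mem_Dlist h')
          · exact (UA_ne hd41 hd42 _ h).2 (congrArg (fun x => x + 1) hf4)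
    · have hcI' : c ∉ I' := fun h => hcI (hsub h)
      have hcIc : c ∈ Iᶜ := Finset.mem_compl.mpr hcI
      have hcI'c : c ∈ I'ᶜ := Finset.mem_compl.mpr hcI'
      obtain ⟨hf2, hd21, hd22⟩ := val_sub_form (show t2 ≠ c from fun h => ht2 (h ▸ hcIc))
      obtain ⟨hf4, hd41, hd42⟩ := val_sub_form (show t4 ≠ c from fun h => ht4 (h ▸ hcI'c))
      rw [cwProdAt_eq t1, ccwProdAt_eq t2, cwProdAt_eq t3, ccwProdAt_eq t4,
        Ulist_split t2 Iᶜ hd21 hd22, Ulist_split t4 I'ᶜ hd41 hd42, ← hf2, ← hf4,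
        if_pos hcIc, if_pos hcI'c, ← P_append, ← P_append, ← P_append]
      have hli : Dlist t1 I ++ (UA t2 ((c - t2).val) Iᶜ ++ ([c] ++ UB t2 ((c - t2).val) Iᶜ))
            ++ (Dlist t3 I' ++ (UA t4 ((c - t4).val) I'ᶜ ++ ([c] ++ UB t4 ((c - t4).val) I'ᶜ)))
          = (Dlist t1 I ++ UA t2 ((c - t2).val) Iᶜ)
            ++ c :: ((UB t2 ((c - t2).val) Iᶜ ++ Dlist t3 I' ++ UA t4 ((c - t4).val) I'ᶜ)
              ++ c :: UB t4 ((c - t4).val) I'ᶜ) := by simp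
      rw [hli]
      apply P_sandwich_up
      · intro hmem
        rcases List.mem_append.mp hmem with h | h
        · rcases List.mem_append.mp h with h' | h'
          · exact (UB_ne hd21 hd22 c h').1 hf2
          · exact hcI' (mem_Dlist h')
        · exact (UA_ne hd41 hd42 c h).1 hf4
      · intro hmem
        rcases List.mem_append.mp hmem with h | h
        · rcases List.mem_append.mp h with h' | h'
          · exact Finset.mem_compl.mp (UB_mem_I _ h') hy1I
          · exact hy1nI' (mem_Dlist h')
        · exact (UA_ne hd41 hd42 _ h).2 (congrArg (fun x => x + 1) hf4)

end NTLProof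
namespace NTLProof

variable {n : ℕ} [NeZero n]

lemma one_ne_zero' (hn : 2 ≤ n) : (1 : ZMod n) ≠ 0 := by
  have := cast_ne_of (n := n) (a := 1) (b := 0) (by omega) (by omega) (by omega)
  simpa using this

lemma L3W (hn : 2 ≤ n) {j : ZMod n} {I : Finset (ZMod n)} (hj : j ∉ I) (hj1 : j + 1 ∈ I) :
    ntlGen n j * (cwProd n I * ccwProd n Iᶜ)
      = cwProd n (insert j (I.erase (j + 1))) * ccwProd n (insert j (I.erase (j + 1)))ᶜ
        * ntlGen n j := by
  set I' := insert j (I.erase (j + 1)) with hI'def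
  have hone : (1 : ZMod n) ≠ 0 := one_ne_zero' hn
  have hj1j : j + 1 ≠ j := fun h => hone (by linear_combination h)
  have hj1I' : j + 1 ∉ I' := by
    simp [hI'def, Finset.mem_insert, Finset.mem_erase, hj1j]
  have hjI' : j ∈ I' := Finset.mem_insert_self _ _
  have hcw : cwProd n I = cwProdAt n j I := cwProd_eq_at hj
  have hccw : ccwProd n Iᶜ = ccwProdAt n (j + 1) Iᶜ :=
    ccwProd_eq_at (by simpa using hj1)
  have hcw' : cwProd n I' = cwProdAt n (j + 1) I' := cwProd_eq_at hj1I'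
  have hccw' : ccwProd n I'ᶜ = ccwProdAt n j I'ᶜ := ccwProd_eq_at (by simpa using hjI')
  rw [hcw, hccw, hcw', hccw', cwProdAt_eq, ccwProdAt_eq, cwProdAt_eq, ccwProdAt_eq]
  have hn1 : (1 : ℕ) ≤ n - 1 := by omega
  have hn2 : n - 1 ≤ n - 1 := le_rfl
  have hnn1 : 1 ≤ n - 1 := hn1
  -- the four splits
  have hc1 : j + ((1 : ℕ) : ZMod n) = j + 1 := by norm_num
  have hcn1 : (j + 1) + ((n - 1 : ℕ) : ZMod n) = j := by
    have : (1 : ZMod n) + ((n - 1 : ℕ) : ZMod n) = ((1 + (n - 1) : ℕ) : ZMod n) := by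
      push_cast; ring
    rw [add_assoc, this, show 1 + (n - 1) = n from by omega, ZMod.natCast_self, add_zero]
  have hsD1 : Dlist j I = DA j 1 I ++ ([j + 1] ++ DB j 1 I) := by
    rw [Dlist_split j I (d := 1) le_rfl hn1, hc1, if_pos hj1]
  have hDB1 : DB j 1 I = [] := by
    rw [DB]; simp
  have hsU2 : Ulist (j + 1) Iᶜ = UA (j + 1) (n - 1) Iᶜ ++ ([j] ++ UB (j + 1) (n - 1) Iᶜ) := by
    rw [Ulist_split (j + 1) Iᶜ (d := n - 1) hnn1 le_rfl, hcn1, if_pos (by simpa using hj)]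
  have hUB2 : UB (j + 1) (n - 1) Iᶜ = [] := by
    rw [UB]; simp
  have hsD3 : Dlist (j + 1) I' = DA (j + 1) (n - 1) I' ++ ([j] ++ DB (j + 1) (n - 1) I') := by
    rw [Dlist_split (j + 1) I' (d := n - 1) hnn1 le_rfl, hcn1, if_pos hjI']
  have hDA3 : DA (j + 1) (n - 1) I' = [] := by
    rw [DA]; simp
  have hsU4 : Ulist j I'ᶜ = UA j 1 I'ᶜ ++ ([j + 1] ++ UB j 1 I'ᶜ) := by
    rw [Ulist_split j I'ᶜ (d := 1) le_rfl hn1, hc1, if_pos (by simpa using hj1I')]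
  have hUA4 : UA j 1 I'ᶜ = [] := by
    rw [UA]; simp
  -- the identifications
  have hmemI : ∀ (k : ℕ), 2 ≤ k → k ≤ n - 1 →
      ((j + (k : ZMod n) ∈ I') ↔ (j + (k : ZMod n) ∈ I)) := by
    intro k hk2 hk3
    have hne0 : j + (k : ZMod n) ≠ j := by
      intro h
      have : j + ((k : ℕ) : ZMod n) = j + ((0 : ℕ) : ZMod n) := by simpa using h
      exact shift_ne j (by omega) (by omega) (by omega) this
    have hne1 : j + (k : ZMod n) ≠ j + 1 := by
      intro h
      have : j + ((k : ℕ) : ZMod n) = j + ((1 : ℕ) : ZMod n) := by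
        rw [h, hc1]
      exact shift_ne j (by omega) (by omega) (by omega) this
    simp [hI'def, Finset.mem_insert, Finset.mem_erase, hne0, hne1]
  have hDBDA : DB (j + 1) (n - 1) I' = DA j 1 I := by
    rw [DB, DA]
    have hmap : (List.range (n - 1 - 1)).map (fun s => (j + 1) + ((n - 1 - 1 - s : ℕ) : ZMod n))
        = (List.range (n - 1 - 1)).map (fun s => j + ((n - 1 - s : ℕ) : ZMod n)) := by
      apply List.map_congr_left
      intro s hs
      simp only [List.mem_range] at hs
      calc (j + 1) + ((n - 1 - 1 - s : ℕ) : ZMod n)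
          = j + ((1 + (n - 1 - 1 - s) : ℕ) : ZMod n) := by push_cast; ring
        _ = j + ((n - 1 - s : ℕ) : ZMod n) := by
            rw [show 1 + (n - 1 - 1 - s) = n - 1 - s from by omega]
    rw [hmap]
    apply List.filter_congr
    intro x hx
    obtain ⟨s, hs, rfl⟩ := List.mem_map.mp hx
    rw [List.mem_range] at hs
    have := hmemI (n - 1 - s) (by omega) (by omega)
    simp only [decide_eq_decide]
    exact this
  have hUBUA : UB j 1 I'ᶜ = UA (j + 1) (n - 1) Iᶜ := by
    rw [UB, UA]
    have hmap : (List.range (n - 1 - 1)).map (fun s => j + ((1 + s + 1 : ℕ) : ZMod n))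
        = (List.range (n - 1 - 1)).map (fun s => (j + 1) + ((s + 1 : ℕ) : ZMod n)) := by
      apply List.map_congr_left
      intro s hs
      push_cast
      ring
    have hlen : n - 1 - 1 = n - 1 - 1 := rfl
    rw [hmap]
    apply List.filter_congr
    intro x hx
    obtain ⟨s, hs, rfl⟩ := List.mem_map.mp hx
    rw [List.mem_range] at hs
    have hxj : (j + 1) + ((s + 1 : ℕ) : ZMod n) = j + ((s + 2 : ℕ) : ZMod n) := by
      push_cast; ring
    have := hmemI (s + 2) (by omega) (by omega)
    simp only [decide_eq_decide, Finset.mem_compl, hxj]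
    rw [this]
  rw [hsD1, hsU2, hsD3, hsU4, hDB1, hUB2, hDA3, hUA4, hDBDA, hUBUA]
  simp only [P_append, P_cons, P_nil, List.append_nil, List.nil_append]
  noncomm_ring

end NTLProof
namespace NTLProof

variable {n : ℕ} [NeZero n]

noncomputable def W (I : Finset (ZMod n)) : NTL n := cwProd n I * ccwProd n Iᶜ

lemma exists_base {I : Finset (ZMod n)} (h : I.card ≤ n - 1) : ∃ t, t ∉ I := by
  by_contra hc
  push_neg at hc
  have huniv : I = Finset.univ := Finset.eq_univ_iff_forall.mpr hc
  have hcard := ZMod.card n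
  rw [huniv, Finset.card_univ, hcard] at h
  have := npos (n := n)
  omega

lemma exists_base_compl {I : Finset (ZMod n)} (h : 1 ≤ I.card) : ∃ t, t ∉ Iᶜ := by
  obtain ⟨x, hx⟩ := Finset.card_pos.mp h
  exact ⟨x, by simp [hx]⟩

lemma L1Wfull {j : ZMod n} {I : Finset (ZMod n)} (h1 : 1 ≤ I.card) (h2 : I.card ≤ n - 1)
    (hbad : ¬(j ∉ I ∧ j + 1 ∈ I)) : ntlGen n j * W I = 0 := by
  obtain ⟨t1, ht1⟩ := exists_base h2
  obtain ⟨t2, ht2⟩ := exists_base_compl h1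
  rw [W, cwProd_eq_at ht1, ccwProd_eq_at ht2]
  exact L1_at ht1 ht2 hbad

lemma L2Wfull {j : ZMod n} {I : Finset (ZMod n)} (h1 : 1 ≤ I.card) (h2 : I.card ≤ n - 1)
    (hbad : ¬(j ∈ I ∧ j + 1 ∉ I)) : W I * ntlGen n j = 0 := by
  obtain ⟨t1, ht1⟩ := exists_base h2
  obtain ⟨t2, ht2⟩ := exists_base_compl h1
  rw [W, cwProd_eq_at ht1, ccwProd_eq_at ht2]
  exact L2_at ht1 ht2 hbad

lemma orthW {I I' : Finset (ZMod n)} (h1 : 1 ≤ I.card) (h2 : I.card ≤ n - 1)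
    (h3 : 1 ≤ I'.card) (h4 : I'.card ≤ n - 1) (hne : I ≠ I') : W I * W I' = 0 := by
  obtain ⟨t1, ht1⟩ := exists_base h2
  obtain ⟨t2, ht2⟩ := exists_base_compl h1
  obtain ⟨t3, ht3⟩ := exists_base h4
  obtain ⟨t4, ht4⟩ := exists_base_compl h3
  rw [W, W, cwProd_eq_at ht1, ccwProd_eq_at ht2, cwProd_eq_at ht3, ccwProd_eq_at ht4]
  exact orth_at ht1 ht2 ht3 ht4 hne

lemma L3Wfull (hn : 2 ≤ n) {j : ZMod n} {I : Finset (ZMod n)} (hj : j ∉ I) (hj1 : j + 1 ∈ I) :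
    ntlGen n j * W I = W (insert j (I.erase (j + 1))) * ntlGen n j := L3W hn hj hj1

lemma zeq {K : ℕ} (hK1 : 1 ≤ K) (hK2 : K ≤ n - 1) :
    eNTL n K * hNTL n (n - K)
      = ∑ I ∈ Finset.powersetCard K (Finset.univ : Finset (ZMod n)), W I := by
  rw [eNTL, hNTL, Finset.sum_mul_sum]
  apply Finset.sum_congr rfl
  intro I hI
  have hIcard : I.card = K := by rwa [Finset.mem_powersetCard_univ] at hI
  have hcompl : Iᶜ ∈ Finset.powersetCard (n - K) (Finset.univ : Finset (ZMod n)) := by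
    rw [Finset.mem_powersetCard_univ, Finset.card_compl, hIcard, ZMod.card]
  have hvan : ∀ J ∈ Finset.powersetCard (n - K) (Finset.univ : Finset (ZMod n)), J ≠ Iᶜ →
      cwProd n I * ccwProd n J = 0 := by
    intro J hJ hne
    have hJcard : J.card = n - K := by rwa [Finset.mem_powersetCard_univ] at hJ
    obtain ⟨t1, ht1⟩ := exists_base (I := I) (by omega)
    obtain ⟨t2, ht2⟩ := exists_base (I := J) (by omega)
    rw [cwProd_eq_at ht1, ccwProd_eq_at ht2]
    obtain ⟨c, hcI, hcJ⟩ : ∃ c, c ∈ I ∧ c ∈ J := by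
      by_contra h
      push_neg at h
      have hsub : J ⊆ Iᶜ := fun x hx => Finset.mem_compl.mpr (fun hxI => h x hxI hx)
      refine hne (Finset.eq_of_subset_of_card_le hsub ?_)
      rw [Finset.card_compl, hIcard, ZMod.card, hJcard]
    exact claimA_at ht1 ht2 hcI hcJ
  rw [Finset.sum_eq_single_of_mem Iᶜ hcompl hvan]
  rfl

lemma Z_comm_gen (hn : 2 ≤ n) {K : ℕ} (hK1 : 1 ≤ K) (hK2 : K ≤ n - 1) (j : ZMod n) :
    ntlGen n j * (∑ I ∈ Finset.powersetCard K (Finset.univ : Finset (ZMod n)), W I)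
      = (∑ I ∈ Finset.powersetCard K (Finset.univ : Finset (ZMod n)), W I) * ntlGen n j := by
  classical
  rw [Finset.mul_sum, Finset.sum_mul]
  have hL : ∑ I ∈ Finset.powersetCard K (Finset.univ : Finset (ZMod n)),
        ntlGen n j * W I
      = ∑ I ∈ (Finset.powersetCard K (Finset.univ : Finset (ZMod n))).filter
          (fun I => j ∉ I ∧ j + 1 ∈ I), ntlGen n j * W I := by
    symm
    apply Finset.sum_filter_of_ne
    intro I hI hne
    by_contra hbad
    have hIcard : I.card = K := by rwa [Finset.mem_powersetCard_univ] at hI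
    exact hne (L1Wfull (by omega) (by omega) hbad)
  have hR : ∑ I ∈ Finset.powersetCard K (Finset.univ : Finset (ZMod n)),
        W I * ntlGen n j
      = ∑ I ∈ (Finset.powersetCard K (Finset.univ : Finset (ZMod n))).filter
          (fun I => j ∈ I ∧ j + 1 ∉ I), W I * ntlGen n j := by
    symm
    apply Finset.sum_filter_of_ne
    intro I hI hne
    by_contra hbad
    have hIcard : I.card = K := by rwa [Finset.mem_powersetCard_univ] at hI
    exact hne (L2Wfull (by omega) (by omega) hbad)
  rw [hL, hR]
  have hone : (1 : ZMod n) ≠ 0 := one_ne_zero' hn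
  have hj1j : j + 1 ≠ j := fun h => hone (by linear_combination h)
  have hjj1 : j ≠ j + 1 := fun h => hj1j h.symm
  apply Finset.sum_nbij' (i := fun I => insert j (I.erase (j + 1)))
    (j := fun I' => insert (j + 1) (I'.erase j))
  · intro I hI
    simp only [Finset.mem_filter, Finset.mem_powersetCard_univ] at hI ⊢
    obtain ⟨hIcard, hjI, hj1I⟩ := hI
    refine ⟨?_, Finset.mem_insert_self _ _, ?_⟩
    · rw [Finset.card_insert_of_notMem (fun h => hjI (Finset.mem_of_mem_erase h)),
        Finset.card_erase_of_mem hj1I]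
      omega
    · simp [Finset.mem_insert, Finset.mem_erase, hj1j]
  · intro I' hI'
    simp only [Finset.mem_filter, Finset.mem_powersetCard_univ] at hI' ⊢
    obtain ⟨hIcard, hjI', hj1I'⟩ := hI'
    refine ⟨?_, ?_, Finset.mem_insert_self _ _⟩
    · rw [Finset.card_insert_of_notMem (fun h => hj1I' (Finset.mem_of_mem_erase h)),
        Finset.card_erase_of_mem hjI']
      omega
    · simp [Finset.mem_insert, Finset.mem_erase, hjj1]
  · intro I hI
    simp only [Finset.mem_filter, Finset.mem_powersetCard_univ] at hI
    obtain ⟨hIcard, hjI, hj1I⟩ := hI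
    rw [Finset.erase_insert (fun h => hjI (Finset.mem_of_mem_erase h)),
      Finset.insert_erase hj1I]
  · intro I' hI'
    simp only [Finset.mem_filter, Finset.mem_powersetCard_univ] at hI'
    obtain ⟨hIcard, hjI', hj1I'⟩ := hI'
    rw [Finset.erase_insert (fun h => hj1I' (Finset.mem_of_mem_erase h)),
      Finset.insert_erase hjI']
  · intro I hI
    simp only [Finset.mem_filter, Finset.mem_powersetCard_univ] at hI
    obtain ⟨hIcard, hjI, hj1I⟩ := hI
    exact L3Wfull hn hjI hj1I

lemma Z_central (hn : 2 ≤ n) {K : ℕ} (hK1 : 1 ≤ K) (hK2 : K ≤ n - 1) (x : NTL n) :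
    (∑ I ∈ Finset.powersetCard K (Finset.univ : Finset (ZMod n)), W I) * x
      = x * (∑ I ∈ Finset.powersetCard K (Finset.univ : Finset (ZMod n)), W I) := by
  set Z := ∑ I ∈ Finset.powersetCard K (Finset.univ : Finset (ZMod n)), W (n := n) I with hZ
  obtain ⟨y, rfl⟩ := RingQuot.mkRingHom_surjective (NTLRel n) x
  induction y using FreeAlgebra.induction with
  | grade0 r =>
    rw [show (RingQuot.mkRingHom (NTLRel n)) (algebraMap ℤ _ r) = ((r : ℤ) : NTL n) by
      rw [eq_intCast (algebraMap ℤ (FreeAlgebra ℤ (ZMod n))) r]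
      exact map_intCast _ r]
    exact (Int.cast_commute r Z).symm.eq
  | grade1 i =>
    exact (Z_comm_gen hn hK1 hK2 i).symm
  | mul a b iha ihb =>
    rw [map_mul, ← mul_assoc, iha, mul_assoc, ihb, ← mul_assoc]
  | add a b iha ihb =>
    rw [map_add, mul_add, add_mul, iha, ihb]

end NTLProof


/-- In the affine nil-Temperley-Lieb algebra `A_n`, the elements
`z_k = e_k · h_{n-k}` (for `1 ≤ k ≤ n-1`) are central, and `z_k · z_l = 0`
for `k ≠ l`. -/
theorem zNTL_central_and_orthogonal (n : ℕ) [NeZero n] (hn : 2 ≤ n) :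
    (∀ K : ℕ, 1 ≤ K → K ≤ n - 1 → ∀ x : NTL n,
      (eNTL n K * hNTL n (n - K)) * x = x * (eNTL n K * hNTL n (n - K))) ∧
    (∀ K L : ℕ, 1 ≤ K → K ≤ n - 1 → 1 ≤ L → L ≤ n - 1 → K ≠ L →
      (eNTL n K * hNTL n (n - K)) * (eNTL n L * hNTL n (n - L)) = 0) := by
  constructor
  · intro K hK1 hK2 x
    rw [NTLProof.zeq hK1 hK2]
    exact NTLProof.Z_central hn hK1 hK2 x
  · intro K L hK1 hK2 hL1 hL2 hKL
    rw [NTLProof.zeq hK1 hK2, NTLProof.zeq hL1 hL2, Finset.sum_mul_sum]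
    apply Finset.sum_eq_zero
    intro I hI
    apply Finset.sum_eq_zero
    intro J hJ
    have hIcard : I.card = K := by rwa [Finset.mem_powersetCard_univ] at hI
    have hJcard : J.card = L := by rwa [Finset.mem_powersetCard_univ] at hJ
    exact NTLProof.orthW (by omega) (by omega) (by omega) (by omega)
      (fun h => hKL (by rw [← hIcard, ← hJcard, h]))
end
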